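/- arXiv:1103.0935 — 6 statements merged into one kernel-verified Lean document; each statement's English description precedes it below -/
import Mathlib

section
/- Let a > 0, c ≥ 1, and let f : (0,∞) → [0,∞) be measurable with f(x) ≤ c·f(a)·max(1, x/a) for all x > 0. Then for every ξ > 0, f(a) ≥ ξ·Lf(ξ) / (c·(1 + (aξ)⁻¹·e^{-aξ})), where Lf(ξ) = ∫₀^∞ e^{-ξx} f(x) dx is the Laplace transform of f. -/
open MeasureTheory Real Set Filter Topology

theorem laplace_lower_bound
    (f : ℝ → ℝ) (a c ξ : ℝ) (ha : 0 < a) (hc : 1 ≤ c) (hξ : 0 < ξ)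
    (hf_nonneg : ∀ x, 0 < x → 0 ≤ f x)
    (hf_bound : ∀ x, 0 < x → f x ≤ c * f a * max 1 (x / a))
    (hf_int : IntegrableOn (fun x => Real.exp (-ξ * x) * f x) (Ioi 0)) :
    f a ≥ ξ * (∫ x in Ioi (0:ℝ), Real.exp (-ξ * x) * f x) /
      (c * (1 + (a * ξ)⁻¹ * Real.exp (-(a * ξ)))) := by
  have hfa : 0 ≤ f a := hf_nonneg a ha
  have hc0 : (0:ℝ) < c := lt_of_lt_of_le one_pos hc
  have hξ0 : ξ ≠ 0 := ne_of_gt hξ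
  have ha0 : a ≠ 0 := ne_of_gt ha
  have hD : 0 < c * (1 + (a * ξ)⁻¹ * Real.exp (-(a * ξ))) := by positivity
  rw [ge_iff_le, div_le_iff₀ hD]
  -- antiderivative for x * exp (-ξ x)
  set g : ℝ → ℝ := fun x => -(x / ξ + 1 / ξ ^ 2) * Real.exp (-ξ * x) with hg
  have hderiv : ∀ x : ℝ, HasDerivAt g (x * Real.exp (-ξ * x)) x := by
    intro x
    have h1 : HasDerivAt (fun x : ℝ => -(x / ξ + 1 / ξ ^ 2)) (-(1/ξ)) x :=
      (((hasDerivAt_id x).div_const ξ).add_const (1 / ξ ^ 2)).neg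
    have h2 : HasDerivAt (fun x : ℝ => Real.exp (-ξ * x)) (-ξ * Real.exp (-ξ * x)) x := by
      simpa [mul_comm] using ((hasDerivAt_id x).const_mul (-ξ)).exp
    have := h1.mul h2
    refine this.congr_deriv ?_
    field_simp
    ring
  have htend : Tendsto g atTop (𝓝 0) := by
    have hx : Tendsto (fun x : ℝ => x * Real.exp (-ξ * x)) atTop (𝓝 0) := by
      have h1 : Tendsto (fun y : ℝ => y ^ 1 * Real.exp (-y)) atTop (𝓝 0) :=
        Real.tendsto_pow_mul_exp_neg_atTop_nhds_zero 1
      have h2 : Tendsto (fun x : ℝ => ξ * x) atTop atTop :=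
        tendsto_id.const_mul_atTop hξ
      have h3 := (h1.comp h2).const_mul (1/ξ)
      rw [mul_zero] at h3
      refine h3.congr fun x => ?_
      simp only [Function.comp]
      rw [pow_one]
      field_simp
    have he : Tendsto (fun x : ℝ => Real.exp (-ξ * x)) atTop (𝓝 0) := by
      have := Real.tendsto_exp_neg_atTop_nhds_zero.comp
        (tendsto_id.const_mul_atTop hξ : Tendsto (fun x : ℝ => ξ * x) atTop atTop)
      refine this.congr fun x => ?_
      show Real.exp (-(ξ * x)) = _
      rw [neg_mul]
    have := ((hx.const_mul (-(1/ξ))).add ((he.const_mul (-(1/ξ^2))))).congr (fun x => by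
      show _ = -(x / ξ + 1 / ξ ^ 2) * Real.exp (-ξ * x); ring)
    have h0 : Tendsto (fun x : ℝ => -(x / ξ + 1 / ξ ^ 2) * Real.exp (-ξ * x)) atTop (𝓝 0) := by
      simpa using this
    exact h0
  -- integral of x * exp over (a, ∞)
  have hint_x : IntegrableOn (fun x => x * Real.exp (-ξ * x)) (Ioi a) :=
    integrableOn_Ioi_deriv_of_nonneg' (fun x _ => hderiv x)
      (fun x hx => mul_nonneg (le_of_lt (lt_trans ha hx)) (Real.exp_pos _).le) htend
  have hval_x : ∫ x in Ioi a, x * Real.exp (-ξ * x)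
      = (a / ξ + 1 / ξ ^ 2) * Real.exp (-ξ * a) := by
    rw [integral_Ioi_of_hasDerivAt_of_tendsto' (fun x _ => hderiv x) hint_x htend]
    simp only [hg, zero_sub, neg_mul, neg_neg]
  -- integral of exp over (0, a]
  have hval_e : ∫ x in Ioc (0:ℝ) a, Real.exp (-ξ * x) = (1 - Real.exp (-ξ * a)) / ξ := by
    rw [← intervalIntegral.integral_of_le ha.le]
    have : ∀ x : ℝ, HasDerivAt (fun y => -(1/ξ) * Real.exp (-ξ * y)) (Real.exp (-ξ * x)) x := by
      intro x
      have h2 : HasDerivAt (fun y : ℝ => Real.exp (-ξ * y)) (-ξ * Real.exp (-ξ * x)) x := by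
        simpa [mul_comm] using ((hasDerivAt_id x).const_mul (-ξ)).exp
      have := h2.const_mul (-(1/ξ))
      refine this.congr_deriv ?_
      simp only [neg_mul, mul_neg, neg_neg, one_div, inv_mul_cancel_left₀ hξ0]
    rw [intervalIntegral.integral_eq_sub_of_hasDerivAt (fun x _ => this x)
      ((Continuous.intervalIntegrable (by continuity) _ _))]
    field_simp
    simp only [mul_zero, neg_zero, Real.exp_zero]
    ring
  -- the majorant and its integral
  set M : ℝ → ℝ := fun x => Real.exp (-ξ * x) * (c * f a * max 1 (x / a)) with hM
  have hM_Ioc : IntegrableOn M (Ioc (0:ℝ) a) := by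
    apply Continuous.integrableOn_Ioc
    exact (Real.continuous_exp.comp (continuous_const.mul continuous_id)).mul
      (continuous_const.mul (continuous_const.max (continuous_id.div_const a)))
  have hmax_Ioc : ∀ x ∈ Ioc (0:ℝ) a, M x = Real.exp (-ξ * x) * (c * f a) := by
    intro x hx
    have : x / a ≤ 1 := (div_le_one ha).2 hx.2
    simp only [hM, max_eq_left this, mul_one]
  have hmax_Ioi : ∀ x ∈ Ioi a, M x = (c * f a / a) * (x * Real.exp (-ξ * x)) := by
    intro x hx
    have h1 : (1:ℝ) ≤ x / a := (one_le_div ha).2 (le_of_lt hx)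
    simp only [hM, max_eq_right h1]
    ring
  have hM_Ioi : IntegrableOn M (Ioi a) := by
    refine (IntegrableOn.congr_fun ((hint_x.const_mul (c * f a / a)))
      (fun x hx => (hmax_Ioi x hx).symm) measurableSet_Ioi)
  have hunion : Ioc (0:ℝ) a ∪ Ioi a = Ioi 0 := Ioc_union_Ioi_eq_Ioi ha.le
  have hM_int : IntegrableOn M (Ioi (0:ℝ)) := by
    rw [← hunion]; exact hM_Ioc.union hM_Ioi
  -- value of the majorant integral
  have hval_M : ∫ x in Ioi (0:ℝ), M x
      = c * f a * (1 + (a * ξ)⁻¹ * Real.exp (-(a * ξ))) / ξ := by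
    rw [← hunion, setIntegral_union (Ioc_disjoint_Ioi le_rfl) measurableSet_Ioi hM_Ioc hM_Ioi]
    rw [setIntegral_congr_fun measurableSet_Ioc hmax_Ioc,
        setIntegral_congr_fun measurableSet_Ioi hmax_Ioi]
    rw [integral_mul_const, hval_e, integral_const_mul, hval_x]
    have : -ξ * a = -(a * ξ) := by ring
    rw [this]
    field_simp
    ring
  -- comparison
  have hle : (∫ x in Ioi (0:ℝ), Real.exp (-ξ * x) * f x) ≤ ∫ x in Ioi (0:ℝ), M x := by
    refine setIntegral_mono_on hf_int hM_int measurableSet_Ioi fun x hx => ?_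
    exact mul_le_mul_of_nonneg_left (hf_bound x hx) (Real.exp_pos _).le
  calc ξ * (∫ x in Ioi (0:ℝ), Real.exp (-ξ * x) * f x)
      ≤ ξ * ∫ x in Ioi (0:ℝ), M x := by
        exact mul_le_mul_of_nonneg_left hle hξ.le
    _ = f a * (c * (1 + (a * ξ)⁻¹ * Real.exp (-(a * ξ)))) := by
        rw [hval_M]; field_simp
end

section
/- Let ψ : (0,∞) → (0,∞) be such that ψ and ξ ↦ ξ/ψ(ξ) are both nondecreasing. Define ψ†(ξ) = exp( (1/π) ∫₀^∞ log ψ(ξ²ζ²)/(1+ζ²) dζ ) for ξ > 0. Then e^{-2G/π} √ψ(ξ²) ≤ ψ†(ξ) ≤ e^{2G/π} √ψ(ξ²) for all ξ > 0, where G is the Catalan constant. Moreover e^{2G/π} ≤ 2. -/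
open MeasureTheory Real Set Filter Topology

lemma aux_ftc {m : ℝ} (hm : 1 ≤ m) :
    IntegrableOn (fun x : ℝ => Real.log x * x ^ (-m - 1)) (Ioi 1) ∧
    (∫ x in Ioi (1:ℝ), Real.log x * x ^ (-m - 1)) = 1 / m ^ 2 := by
  have hm0 : 0 < m := lt_of_lt_of_le one_pos hm
  set F : ℝ → ℝ := fun x => -(x ^ (-m) * Real.log x) / m - x ^ (-m) / m ^ 2 with hF
  have hderiv : ∀ x ∈ Ici (1:ℝ), HasDerivAt F (Real.log x * x ^ (-m - 1)) x := by
    intro x hx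
    have hx0 : (0:ℝ) < x := lt_of_lt_of_le one_pos hx
    have h1 : HasDerivAt (fun y : ℝ => y ^ (-m)) (-m * x ^ (-m - 1)) x :=
      Real.hasDerivAt_rpow_const (Or.inl hx0.ne')
    have h2 : HasDerivAt Real.log x⁻¹ x := Real.hasDerivAt_log hx0.ne'
    have h3 := ((h1.mul h2).neg.div_const m).sub (h1.div_const (m ^ 2))
    refine h3.congr_deriv ?_
    have e1 : x ^ (-m) = x ^ (-m - 1) * x := by
      rw [← Real.rpow_add_one hx0.ne']; ring_nf
    rw [e1]
    field_simp
    ring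
  have hpos : ∀ x ∈ Ioi (1:ℝ), 0 ≤ Real.log x * x ^ (-m - 1) := by
    intro x hx
    exact mul_nonneg (Real.log_nonneg (le_of_lt hx)) (Real.rpow_pos_of_pos (lt_trans one_pos hx) _).le
  have htend : Tendsto F atTop (𝓝 0) := by
    have t1 : Tendsto (fun x : ℝ => x ^ (-m) * Real.log x) atTop (𝓝 0) := by
      have := (isLittleO_log_rpow_atTop hm0).tendsto_div_nhds_zero
      refine this.congr' ?_
      filter_upwards [eventually_gt_atTop (0:ℝ)] with x hx
      rw [Real.rpow_neg hx.le, div_eq_mul_inv, mul_comm]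
    have t2 : Tendsto (fun x : ℝ => x ^ (-m)) atTop (𝓝 (0:ℝ)) := tendsto_rpow_neg_atTop hm0
    have := ((t1.neg.div_const m).sub (t2.div_const (m ^ 2)))
    simpa using this
  have hint : IntegrableOn (fun x : ℝ => Real.log x * x ^ (-m - 1)) (Ioi 1) :=
    integrableOn_Ioi_deriv_of_nonneg' hderiv hpos htend
  refine ⟨hint, ?_⟩
  rw [integral_Ioi_of_hasDerivAt_of_nonneg' hderiv hpos htend]
  simp [hF, Real.log_one, Real.one_rpow]

lemma aux_term (n : ℕ) :
    IntegrableOn (fun x : ℝ => Real.log x * x ^ (-2*(n:ℝ) - 2)) (Ioi 1) ∧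
    (∫ x in Ioi (1:ℝ), Real.log x * x ^ (-2*(n:ℝ) - 2)) = 1 / (2*(n:ℝ) + 1) ^ 2 := by
  have hm : (1:ℝ) ≤ 2*(n:ℝ) + 1 := by nlinarith [Nat.cast_nonneg (α := ℝ) n]
  have h := aux_ftc hm
  have he : -(2*(n:ℝ) + 1) - 1 = -2*(n:ℝ) - 2 := by ring
  rw [he] at h
  exact h

lemma aux_geom (N : ℕ) {x : ℝ} (hx : 1 < x) :
    Real.log x / (1 + x ^ 2) =
      (∑ n ∈ Finset.range N, (-1:ℝ) ^ n * (Real.log x * x ^ (-2*(n:ℝ) - 2)))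
      + (-1:ℝ) ^ N * (Real.log x * x ^ (-2*(N:ℝ)) / (1 + x ^ 2)) := by
  have hx0 : (0:ℝ) < x := lt_trans one_pos hx
  have hden : (0:ℝ) < 1 + x ^ 2 := by positivity
  induction N with
  | zero => simp
  | succ N ih =>
    rw [Finset.sum_range_succ, ih]
    have key : (-1:ℝ) ^ N * (Real.log x * x ^ (-2*(N:ℝ)) / (1 + x ^ 2)) =
        (-1:ℝ) ^ N * (Real.log x * x ^ (-2*(N:ℝ) - 2))
        + (-1:ℝ) ^ (N+1) * (Real.log x * x ^ (-2*((N:ℝ)+1)) / (1 + x ^ 2)) := by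
      have e1 : x ^ (-2*(N:ℝ)) = x ^ (-2*(N:ℝ) - 2) * x ^ (2:ℝ) := by
        rw [← Real.rpow_add hx0]; ring_nf
      have e2 : x ^ (-2*((N:ℝ)+1)) = x ^ (-2*(N:ℝ) - 2) := by ring_nf
      have e3 : x ^ (2:ℝ) = x ^ 2 := by
        rw [show ((2:ℝ)) = ((2:ℕ):ℝ) by norm_num, Real.rpow_natCast]
      rw [e1, e2, e3, pow_succ]
      field_simp
      ring
    rw [key]
    push_cast
    ring

lemma rpow_neg_two_eq {x : ℝ} (hx : 0 < x) : x ^ (-2:ℝ) = (x ^ 2)⁻¹ := by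
  rw [show (-2:ℝ) = -((2:ℕ):ℝ) by norm_num, Real.rpow_neg hx.le, Real.rpow_natCast]

lemma aux_S_meas : ContinuousOn (fun x : ℝ => Real.log x / (1 + x ^ 2)) (Ioi 1) := by
  apply ContinuousOn.div
  · exact Real.continuousOn_log.mono (fun x hx => by
      simp only [mem_compl_iff, mem_singleton_iff]
      exact ne_of_gt (lt_trans one_pos hx))
  · exact (continuous_const.add (continuous_pow 2)).continuousOn
  · intro x _; positivity

lemma aux_S_int : IntegrableOn (fun x : ℝ => Real.log x / (1 + x ^ 2)) (Ioi 1) := by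
  have h := (aux_ftc (le_refl (1:ℝ))).1
  refine Integrable.mono' (by simpa using h.integrable) (aux_S_meas.aestronglyMeasurable measurableSet_Ioi) ?_
  filter_upwards [ae_restrict_mem measurableSet_Ioi] with x hx
  have hx1 : (1:ℝ) < x := hx
  have hx0 : (0:ℝ) < x := lt_trans one_pos hx1
  have hlog : 0 ≤ Real.log x := Real.log_nonneg hx1.le
  rw [Real.norm_eq_abs, abs_of_nonneg (by positivity)]
  have h2 : x ^ (-1 - 1 : ℝ) = (x ^ 2)⁻¹ := by
    rw [show (-1 - 1 : ℝ) = -2 by norm_num]; exact rpow_neg_two_eq hx0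
  rw [h2, div_eq_mul_inv]
  gcongr
  all_goals nlinarith

lemma aux_rem_bound (N : ℕ) {x : ℝ} (hx : 1 < x) :
    ‖(-1:ℝ) ^ N * (Real.log x * x ^ (-2*(N:ℝ)) / (1 + x ^ 2))‖ ≤
      Real.log x * x ^ (-2*(N:ℝ) - 2) := by
  have hx0 : (0:ℝ) < x := lt_trans one_pos hx
  have hlog : 0 ≤ Real.log x := Real.log_nonneg hx.le
  have hr : (0:ℝ) < x ^ (-2*(N:ℝ)) := Real.rpow_pos_of_pos hx0 _
  rw [norm_mul, norm_pow, norm_neg, norm_one, one_pow, one_mul, Real.norm_eq_abs,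
    abs_of_nonneg (by positivity)]
  have e : x ^ (-2*(N:ℝ) - 2) = x ^ (-2*(N:ℝ)) * (x ^ 2)⁻¹ := by
    rw [← rpow_neg_two_eq hx0, ← Real.rpow_add hx0]
    congr 1
  rw [e, div_eq_mul_inv, mul_assoc]
  gcongr
  all_goals nlinarith

lemma aux_rem_int (N : ℕ) :
    IntegrableOn (fun x : ℝ => (-1:ℝ) ^ N * (Real.log x * x ^ (-2*(N:ℝ)) / (1 + x ^ 2))) (Ioi 1) := by
  refine Integrable.mono' (aux_term N).1 ?_ ?_
  · apply ContinuousOn.aestronglyMeasurable _ measurableSet_Ioi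
    apply ContinuousOn.mul continuousOn_const
    apply ContinuousOn.div
    · apply ContinuousOn.mul
      · exact Real.continuousOn_log.mono (fun x hx => by
          simp only [mem_compl_iff, mem_singleton_iff]
          exact ne_of_gt (lt_trans one_pos hx))
      · exact fun x hx => (Real.continuousAt_rpow_const x _ (Or.inl (ne_of_gt (lt_trans one_pos hx)))).continuousWithinAt
    · exact (continuous_const.add (continuous_pow 2)).continuousOn
    · intro x _; positivity
  · filter_upwards [ae_restrict_mem measurableSet_Ioi] with x hx
    exact aux_rem_bound N hx

lemma aux_S_eq (N : ℕ) :
    (∫ x in Ioi (1:ℝ), Real.log x / (1 + x ^ 2)) =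
      (∑ n ∈ Finset.range N, (-1:ℝ) ^ n / (2*(n:ℝ) + 1) ^ 2)
      + ∫ x in Ioi (1:ℝ), (-1:ℝ) ^ N * (Real.log x * x ^ (-2*(N:ℝ)) / (1 + x ^ 2)) := by
  rw [setIntegral_congr_fun measurableSet_Ioi (fun x (hx : 1 < x) => aux_geom N hx)]
  rw [integral_add (integrable_finset_sum _ (fun n _ => ((aux_term n).1.const_mul _)))
    (aux_rem_int N), integral_finset_sum _ (fun n _ => ((aux_term n).1.const_mul _))]
  congr 1
  apply Finset.sum_congr rfl
  intro n _
  rw [integral_const_mul, (aux_term n).2, mul_one_div]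

lemma aux_rem_est (N : ℕ) :
    ‖∫ x in Ioi (1:ℝ), (-1:ℝ) ^ N * (Real.log x * x ^ (-2*(N:ℝ)) / (1 + x ^ 2))‖ ≤
      1 / (2*(N:ℝ) + 1) ^ 2 := by
  rw [← (aux_term N).2]
  apply norm_integral_le_of_norm_le (aux_term N).1
  filter_upwards [ae_restrict_mem measurableSet_Ioi] with x hx
  exact aux_rem_bound N hx

lemma aux_summable : Summable (fun n : ℕ => (-1:ℝ) ^ n / (2*(n:ℝ) + 1) ^ 2) := by
  apply Summable.of_abs
  have h1 : Summable (fun n : ℕ => 1 / ((n:ℝ) + 1) ^ 2) := by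
    have := (summable_nat_add_iff (f := fun n : ℕ => 1 / (n:ℝ) ^ 2) 1).2
      (Real.summable_one_div_nat_pow.2 one_lt_two)
    simpa using this
  apply Summable.of_nonneg_of_le (fun n => abs_nonneg _) _ h1
  intro n
  have hn : (0:ℝ) ≤ (n:ℝ) := Nat.cast_nonneg n
  rw [abs_div, abs_pow, abs_neg, abs_one, one_pow, abs_of_nonneg (by positivity : (0:ℝ) ≤ (2*(n:ℝ)+1)^2)]
  apply one_div_le_one_div_of_le (by positivity)
  nlinarith

lemma aux_S_val (G : ℝ) (hG : G = ∑' n : ℕ, (-1 : ℝ) ^ n / (2 * n + 1) ^ 2) :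
    (∫ x in Ioi (1:ℝ), Real.log x / (1 + x ^ 2)) = G := by
  set S := ∫ x in Ioi (1:ℝ), Real.log x / (1 + x ^ 2) with hS
  have h1 : Tendsto (fun N : ℕ => ∑ n ∈ Finset.range N, (-1:ℝ) ^ n / (2*(n:ℝ) + 1) ^ 2)
      atTop (𝓝 G) := by
    rw [hG]
    exact aux_summable.hasSum.tendsto_sum_nat
  have hR0 : Tendsto (fun N : ℕ =>
      ∫ x in Ioi (1:ℝ), (-1:ℝ) ^ N * (Real.log x * x ^ (-2*(N:ℝ)) / (1 + x ^ 2)))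
      atTop (𝓝 0) := by
    apply squeeze_zero_norm (fun N => aux_rem_est N)
    apply squeeze_zero (fun N => by positivity) (g := fun N : ℕ => 1 / ((N:ℝ) + 1))
    · intro N
      have hn : (0:ℝ) ≤ (N:ℝ) := Nat.cast_nonneg N
      apply one_div_le_one_div_of_le (by positivity)
      nlinarith
    · exact tendsto_one_div_add_atTop_nhds_zero_nat
  have h2 : Tendsto (fun N : ℕ => ∑ n ∈ Finset.range N, (-1:ℝ) ^ n / (2*(n:ℝ) + 1) ^ 2)
      atTop (𝓝 S) := by
    have := (tendsto_const_nhds (x := S) (f := atTop (α := ℕ))).sub hR0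
    rw [sub_zero] at this
    refine this.congr (fun N => ?_)
    rw [hS, aux_S_eq N]; ring
  exact tendsto_nhds_unique h2 h1

lemma aux_G_le (G : ℝ) (hG : G = ∑' n : ℕ, (-1 : ℝ) ^ n / (2 * n + 1) ^ 2) :
    G ≤ 8/9 + 1/25 := by
  have h := aux_S_eq 2
  rw [aux_S_val G hG] at h
  have hest := aux_rem_est 2
  have : |∫ x in Ioi (1:ℝ), (-1:ℝ) ^ 2 * (Real.log x * x ^ (-2*((2:ℕ):ℝ)) / (1 + x ^ 2))| ≤ 1/25 := by
    refine le_trans hest ?_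
    norm_num
  rw [show (∑ n ∈ Finset.range 2, (-1:ℝ) ^ n / (2*(n:ℝ) + 1) ^ 2) = 8/9 by
    simp [Finset.sum_range_succ]; norm_num] at h
  have := abs_le.1 this
  linarith [h.ge, h.le, this.2]

lemma aux_T_meas : ContinuousOn (fun t : ℝ => (-Real.log t) / (1 + t ^ 2)) (Ioo 0 1) := by
  apply ContinuousOn.div
  · exact (Real.continuousOn_log.mono (fun x hx => by
      simp only [mem_compl_iff, mem_singleton_iff]
      exact ne_of_gt hx.1)).neg
  · exact (continuous_const.add (continuous_pow 2)).continuousOn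
  · intro x _; positivity

lemma aux_T_int : IntegrableOn (fun t : ℝ => (-Real.log t) / (1 + t ^ 2)) (Ioo 0 1) := by
  have hbd : IntegrableOn (fun t : ℝ => 2 * t ^ (-1/2 : ℝ)) (Ioo 0 1) := by
    have h := (intervalIntegral.intervalIntegrable_rpow' (a := (0:ℝ)) (b := 1)
      (r := -1/2) (by norm_num)).1
    exact ((h.mono_set Ioo_subset_Ioc_self).const_mul 2)
  refine Integrable.mono' hbd (aux_T_meas.aestronglyMeasurable measurableSet_Ioo) ?_
  filter_upwards [ae_restrict_mem measurableSet_Ioo] with t ht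
  have ht0 : (0:ℝ) < t := ht.1
  have ht1 : t < 1 := ht.2
  have hlog : 0 ≤ -Real.log t := by
    simp only [neg_nonneg]
    exact Real.log_nonpos ht0.le ht1.le
  rw [Real.norm_eq_abs, abs_of_nonneg (by positivity)]
  have key : -Real.log t ≤ 2 * t ^ (-1/2 : ℝ) := by
    have h1 : Real.log (t ^ (-1/2:ℝ)) ≤ t ^ (-1/2:ℝ) - 1 :=
      Real.log_le_sub_one_of_pos (Real.rpow_pos_of_pos ht0 _)
    rw [Real.log_rpow ht0] at h1
    nlinarith [Real.rpow_pos_of_pos ht0 (-1/2:ℝ)]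
  calc (-Real.log t) / (1 + t ^ 2) ≤ -Real.log t := by
        rw [div_le_iff₀ (by positivity)]
        nlinarith
    _ ≤ 2 * t ^ (-1/2 : ℝ) := key

lemma aux_T_val : (∫ t in Ioo (0:ℝ) 1, (-Real.log t) / (1 + t ^ 2))
    = ∫ x in Ioi (1:ℝ), Real.log x / (1 + x ^ 2) := by
  have hsub := integral_comp_rpow_Ioi ((Ioi (1:ℝ)).indicator fun x => Real.log x / (1 + x ^ 2))
    (p := -1) (by norm_num)
  have hL : (∫ x in Ioi (0:ℝ), (|(-1:ℝ)| * x ^ ((-1:ℝ) - 1)) •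
      ((Ioi (1:ℝ)).indicator fun x => Real.log x / (1 + x ^ 2)) (x ^ (-1:ℝ)))
      = ∫ x in Ioi (0:ℝ), (Ioo (0:ℝ) 1).indicator (fun t => (-Real.log t) / (1 + t ^ 2)) x := by
    apply setIntegral_congr_fun measurableSet_Ioi
    intro x hx
    have hx0 : (0:ℝ) < x := hx
    have hinv : x ^ (-1:ℝ) = x⁻¹ := Real.rpow_neg_one x
    have h2 : x ^ ((-1:ℝ) - 1) = (x ^ 2)⁻¹ := by
      rw [show ((-1:ℝ) - 1) = -2 by norm_num]; exact rpow_neg_two_eq hx0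
    dsimp only
    rw [hinv, h2, abs_neg, abs_one, one_mul, smul_eq_mul]
    rcases lt_or_ge x 1 with hx1 | hx1
    · have hmem : x⁻¹ ∈ Ioi (1:ℝ) := by
        simp only [mem_Ioi]
        rw [lt_inv_comm₀ one_pos hx0]
        simpa using hx1
      have hmem2 : x ∈ Ioo (0:ℝ) 1 := ⟨hx0, hx1⟩
      rw [indicator_of_mem hmem, indicator_of_mem hmem2]
      rw [Real.log_inv]
      field_simp
      ring
    · have hmem : x⁻¹ ∉ Ioi (1:ℝ) := by
        simp only [mem_Ioi, not_lt]
        exact inv_le_one_of_one_le₀ hx1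
      have hmem2 : x ∉ Ioo (0:ℝ) 1 := by
        simp only [mem_Ioo, not_and, not_lt]
        intro; exact hx1
      rw [indicator_of_notMem hmem, indicator_of_notMem hmem2, mul_zero]
  rw [hL] at hsub
  have hA : (∫ x in Ioi (0:ℝ), (Ioo (0:ℝ) 1).indicator (fun t => (-Real.log t) / (1 + t ^ 2)) x)
      = ∫ t in Ioo (0:ℝ) 1, (-Real.log t) / (1 + t ^ 2) := by
    rw [setIntegral_indicator measurableSet_Ioo,
      show Ioi (0:ℝ) ∩ Ioo 0 1 = Ioo 0 1 from inter_eq_right.mpr (fun t ht => ht.1)]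
  have hB : (∫ y in Ioi (0:ℝ), (Ioi (1:ℝ)).indicator (fun x => Real.log x / (1 + x ^ 2)) y)
      = ∫ x in Ioi (1:ℝ), Real.log x / (1 + x ^ 2) := by
    rw [setIntegral_indicator measurableSet_Ioi,
      show Ioi (0:ℝ) ∩ Ioi 1 = Ioi 1 from inter_eq_right.mpr (fun t ht => mem_Ioi.2 (lt_trans one_pos (mem_Ioi.1 ht)))]
  rw [← hA, hsub, hB]

lemma psi_comp (ψ : ℝ → ℝ) (hψ_pos : ∀ x, 0 < x → 0 < ψ x)
    (hψ_mono : MonotoneOn ψ (Ioi 0))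
    (hψ_quot : MonotoneOn (fun x => x / ψ x) (Ioi 0))
    {a c : ℝ} (ha : 0 < a) (hc : 0 < c) :
    min 0 (Real.log c) ≤ Real.log (ψ (c * a)) - Real.log (ψ a) ∧
    Real.log (ψ (c * a)) - Real.log (ψ a) ≤ max 0 (Real.log c) := by
  have hca : 0 < c * a := mul_pos hc ha
  have hψa : 0 < ψ a := hψ_pos a ha
  have hψca : 0 < ψ (c * a) := hψ_pos _ hca
  rcases le_total 1 c with hc1 | hc1
  · have hle : a ≤ c * a := le_mul_of_one_le_left ha.le hc1
    constructor
    · have := hψ_mono (mem_Ioi.2 ha) (mem_Ioi.2 hca) hle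
      have hl := Real.log_le_log hψa this
      have : min (0:ℝ) (Real.log c) ≤ 0 := min_le_left _ _
      linarith
    · have hq := hψ_quot (mem_Ioi.2 ha) (mem_Ioi.2 hca) hle
      simp only at hq
      rw [div_le_div_iff₀ hψa hψca] at hq
      have hle2 : ψ (c * a) ≤ c * ψ a := by nlinarith
      have := Real.log_le_log hψca hle2
      rw [Real.log_mul hc.ne' hψa.ne'] at this
      have : Real.log c ≤ max 0 (Real.log c) := le_max_right _ _
      have h2 := Real.log_le_log hψca hle2
      rw [Real.log_mul hc.ne' hψa.ne'] at h2
      linarith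
  · have hle : c * a ≤ a := mul_le_of_le_one_left ha.le hc1
    constructor
    · have hq := hψ_quot (mem_Ioi.2 hca) (mem_Ioi.2 ha) hle
      simp only at hq
      rw [div_le_div_iff₀ hψca hψa] at hq
      have hle2 : c * ψ a ≤ ψ (c * a) := by nlinarith
      have h2 := Real.log_le_log (by positivity) hle2
      rw [Real.log_mul hc.ne' hψa.ne'] at h2
      have : min (0:ℝ) (Real.log c) ≤ Real.log c := min_le_right _ _
      linarith
    · have := hψ_mono (mem_Ioi.2 hca) (mem_Ioi.2 ha) hle
      have hl := Real.log_le_log hψca this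
      have : (0:ℝ) ≤ max 0 (Real.log c) := le_max_left _ _
      linarith

theorem dagger_two_sided_estimate
    (ψ : ℝ → ℝ) (hψ_pos : ∀ x, 0 < x → 0 < ψ x)
    (hψ_mono : MonotoneOn ψ (Ioi 0))
    (hψ_quot : MonotoneOn (fun x => x / ψ x) (Ioi 0))
    (hψ_int : IntegrableOn (fun ζ : ℝ => min 1 (ζ ^ 2)⁻¹ * |Real.log (ψ (ζ ^ 2))|)
      (Ioi 0))
    (G : ℝ) (hG : G = ∑' n : ℕ, (-1 : ℝ) ^ n / (2 * n + 1) ^ 2) :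
    (∀ ξ : ℝ, 0 < ξ →
      Real.exp (-2 * G / π) * Real.sqrt (ψ (ξ ^ 2)) ≤
        Real.exp ((1 / π) * ∫ ζ in Ioi (0:ℝ), Real.log (ψ (ξ ^ 2 * ζ ^ 2)) / (1 + ζ ^ 2)) ∧
      Real.exp ((1 / π) * ∫ ζ in Ioi (0:ℝ), Real.log (ψ (ξ ^ 2 * ζ ^ 2)) / (1 + ζ ^ 2)) ≤
        Real.exp (2 * G / π) * Real.sqrt (ψ (ξ ^ 2))) ∧
    Real.exp (2 * G / π) ≤ 2 := by
  have hS : (∫ x in Ioi (1:ℝ), Real.log x / (1 + x ^ 2)) = G := aux_S_val G hG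
  have hT : (∫ t in Ioo (0:ℝ) 1, (-Real.log t) / (1 + t ^ 2)) = G := aux_T_val.trans hS
  have hπ : (0:ℝ) < π := pi_pos
  constructor
  · intro ξ hξ
    have ha : (0:ℝ) < ξ ^ 2 := by positivity
    have hψx : 0 < ψ (ξ ^ 2) := hψ_pos _ ha
    set c₀ := Real.log (ψ (ξ ^ 2)) with hc₀
    set g : ℝ → ℝ := fun ζ => Real.log (ψ (ξ ^ 2 * ζ ^ 2)) / (1 + ζ ^ 2) with hg
    -- pointwise key estimate
    have hkey : ∀ ζ ∈ Ioi (0:ℝ),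
        min 0 (2 * Real.log ζ) * (1 + ζ ^ 2)⁻¹ ≤ g ζ - c₀ * (1 + ζ ^ 2)⁻¹ ∧
        g ζ - c₀ * (1 + ζ ^ 2)⁻¹ ≤ max 0 (2 * Real.log ζ) * (1 + ζ ^ 2)⁻¹ := by
      intro ζ hζ
      have hζ0 : (0:ℝ) < ζ := hζ
      have hden : (0:ℝ) < 1 + ζ ^ 2 := by positivity
      obtain ⟨h1, h2⟩ := psi_comp ψ hψ_pos hψ_mono hψ_quot (a := ξ ^ 2) (c := ζ ^ 2)
        ha (by positivity)
      rw [show ζ ^ 2 * ξ ^ 2 = ξ ^ 2 * ζ ^ 2 by ring] at h1 h2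
      have hlogsq : Real.log (ζ ^ 2) = 2 * Real.log ζ := by
        rw [Real.log_pow]; push_cast; ring
      rw [hlogsq] at h1 h2
      have he : g ζ - c₀ * (1 + ζ ^ 2)⁻¹ =
          (Real.log (ψ (ξ ^ 2 * ζ ^ 2)) - c₀) * (1 + ζ ^ 2)⁻¹ := by
        rw [hg]; simp only [div_eq_mul_inv]; ring
      rw [he]
      constructor
      · exact mul_le_mul_of_nonneg_right h1 (by positivity)
      · exact mul_le_mul_of_nonneg_right h2 (by positivity)
    -- integrability of g
    have hmono2 : MonotoneOn (fun ζ : ℝ => ψ (ξ ^ 2 * ζ ^ 2)) (Ioi 0) := by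
      intro u hu v hv huv
      have hu0 : (0:ℝ) < u := hu
      have hv0 : (0:ℝ) < v := hv
      have h : u ^ 2 ≤ v ^ 2 := by nlinarith
      exact hψ_mono (mem_Ioi.2 (by positivity)) (mem_Ioi.2 (by positivity))
        (mul_le_mul_of_nonneg_left h (by positivity))
    have hmeas_g : AEStronglyMeasurable g (volume.restrict (Ioi 0)) := by
      have h1 : AEMeasurable (fun ζ : ℝ => ψ (ξ ^ 2 * ζ ^ 2)) (volume.restrict (Ioi 0)) :=
        aemeasurable_restrict_of_monotoneOn measurableSet_Ioi hmono2
      have h2 : AEMeasurable (fun ζ : ℝ => Real.log (ψ (ξ ^ 2 * ζ ^ 2)))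
          (volume.restrict (Ioi 0)) := Real.measurable_log.comp_aemeasurable h1
      have h3 : Measurable fun ζ : ℝ => 1 + ζ ^ 2 := by measurability
      exact (h2.div h3.aemeasurable).aestronglyMeasurable
    have hg_int : IntegrableOn g (Ioi 0) := by
      refine Integrable.mono'
        (hψ_int.add ((integrable_inv_one_add_sq.const_mul
          |Real.log (ξ ^ 2)|).integrableOn)) hmeas_g ?_
      filter_upwards [ae_restrict_mem measurableSet_Ioi] with ζ hζ
      have hζ0 : (0:ℝ) < ζ := hζ
      have hden : (0:ℝ) < 1 + ζ ^ 2 := by positivity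
      obtain ⟨k1, k2⟩ := psi_comp ψ hψ_pos hψ_mono hψ_quot (a := ζ ^ 2) (c := ξ ^ 2)
        (by positivity) ha
      have habs : |Real.log (ψ (ξ ^ 2 * ζ ^ 2)) - Real.log (ψ (ζ ^ 2))| ≤
          |Real.log (ξ ^ 2)| := by
        rw [abs_le]
        constructor
        · refine le_trans ?_ k1
          rcases le_total (Real.log (ξ ^ 2)) 0 with h | h
          · rw [min_eq_right h]; exact neg_abs_le _
          · rw [min_eq_left h]; simp [abs_nonneg]
        · refine le_trans k2 ?_
          exact max_le (abs_nonneg _) (le_abs_self _)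
      have htri : |Real.log (ψ (ξ ^ 2 * ζ ^ 2))| ≤
          |Real.log (ψ (ζ ^ 2))| + |Real.log (ξ ^ 2)| := by
        calc |Real.log (ψ (ξ ^ 2 * ζ ^ 2))|
            = |(Real.log (ψ (ξ ^ 2 * ζ ^ 2)) - Real.log (ψ (ζ ^ 2))) + Real.log (ψ (ζ ^ 2))| := by
              ring_nf
          _ ≤ |Real.log (ψ (ξ ^ 2 * ζ ^ 2)) - Real.log (ψ (ζ ^ 2))| + |Real.log (ψ (ζ ^ 2))| :=
              abs_add_le _ _
          _ ≤ |Real.log (ψ (ζ ^ 2))| + |Real.log (ξ ^ 2)| := by linarith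
      have hinv1 : (1 + ζ ^ 2)⁻¹ ≤ min 1 (ζ ^ 2)⁻¹ := by
        refine le_min ?_ ?_
        · rw [inv_le_one_iff₀]; right; nlinarith
        · rw [inv_le_inv₀ hden (by positivity)]; nlinarith
      calc ‖g ζ‖ = |Real.log (ψ (ξ ^ 2 * ζ ^ 2))| * (1 + ζ ^ 2)⁻¹ := by
            rw [hg]
            simp only [Real.norm_eq_abs, div_eq_mul_inv]
            rw [abs_mul, abs_of_pos (by positivity : (0:ℝ) < (1 + ζ ^ 2)⁻¹)]
        _ ≤ (|Real.log (ψ (ζ ^ 2))| + |Real.log (ξ ^ 2)|) * (1 + ζ ^ 2)⁻¹ := by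
            exact mul_le_mul_of_nonneg_right htri (by positivity)
        _ = |Real.log (ψ (ζ ^ 2))| * (1 + ζ ^ 2)⁻¹ + |Real.log (ξ ^ 2)| * (1 + ζ ^ 2)⁻¹ := by
            ring
        _ ≤ min 1 (ζ ^ 2)⁻¹ * |Real.log (ψ (ζ ^ 2))| + |Real.log (ξ ^ 2)| * (1 + ζ ^ 2)⁻¹ := by
            have hh : |Real.log (ψ (ζ ^ 2))| * (1 + ζ ^ 2)⁻¹ ≤
                min 1 (ζ ^ 2)⁻¹ * |Real.log (ψ (ζ ^ 2))| := by
              rw [mul_comm]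
              exact mul_le_mul_of_nonneg_right hinv1 (abs_nonneg _)
            linarith
    have hconst_int : IntegrableOn (fun ζ : ℝ => c₀ * (1 + ζ ^ 2)⁻¹) (Ioi 0) :=
      (integrable_inv_one_add_sq.const_mul c₀).integrableOn
    have hdiff_int : IntegrableOn (fun ζ => g ζ - c₀ * (1 + ζ ^ 2)⁻¹) (Ioi 0) :=
      hg_int.sub hconst_int
    -- max side
    have hmax_eq : ∀ ζ ∈ Ioi (0:ℝ), max 0 (2 * Real.log ζ) * (1 + ζ ^ 2)⁻¹ =
        (Ioi (1:ℝ)).indicator (fun x => 2 * (Real.log x / (1 + x ^ 2))) ζ := by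
      intro ζ hζ
      have hζ0 : (0:ℝ) < ζ := hζ
      rcases le_or_gt ζ 1 with h1 | h1
      · rw [indicator_of_notMem (by simpa using h1)]
        have : Real.log ζ ≤ 0 := Real.log_nonpos hζ0.le h1
        rw [max_eq_left (by linarith), zero_mul]
      · rw [indicator_of_mem (mem_Ioi.2 h1)]
        have : 0 ≤ Real.log ζ := Real.log_nonneg h1.le
        rw [max_eq_right (by linarith), div_eq_mul_inv]
        ring
    have hmax_int : IntegrableOn (fun ζ : ℝ => max 0 (2 * Real.log ζ) * (1 + ζ ^ 2)⁻¹)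
        (Ioi 0) := by
      have hi : Integrable ((Ioi (1:ℝ)).indicator (fun x => 2 * (Real.log x / (1 + x ^ 2))))
          volume := (integrable_indicator_iff measurableSet_Ioi).2 (aux_S_int.const_mul 2)
      exact (hi.integrableOn).congr_fun (fun ζ hζ => (hmax_eq ζ hζ).symm) measurableSet_Ioi
    have hmax_val : (∫ ζ in Ioi (0:ℝ), max 0 (2 * Real.log ζ) * (1 + ζ ^ 2)⁻¹) = 2 * G := by
      rw [setIntegral_congr_fun measurableSet_Ioi hmax_eq,
        setIntegral_indicator measurableSet_Ioi,
        show Ioi (0:ℝ) ∩ Ioi 1 = Ioi 1 from inter_eq_right.mpr (fun t ht => mem_Ioi.2 (lt_trans one_pos (mem_Ioi.1 ht))),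
        integral_const_mul, hS]
    -- min side
    have hmin_eq : ∀ ζ ∈ Ioi (0:ℝ), min 0 (2 * Real.log ζ) * (1 + ζ ^ 2)⁻¹ =
        (-2) * ((Ioo (0:ℝ) 1).indicator (fun t => (-Real.log t) / (1 + t ^ 2)) ζ) := by
      intro ζ hζ
      have hζ0 : (0:ℝ) < ζ := hζ
      rcases lt_or_ge ζ 1 with h1 | h1
      · have hmem : ζ ∈ Ioo (0:ℝ) 1 := ⟨hζ0, h1⟩
        rw [indicator_of_mem hmem]
        have : Real.log ζ ≤ 0 := Real.log_nonpos hζ0.le h1.le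
        rw [min_eq_right (by linarith), div_eq_mul_inv]
        ring
      · have hnm : ζ ∉ Ioo (0:ℝ) 1 := fun hmem => absurd hmem.2 (not_lt.2 h1)
        rw [indicator_of_notMem hnm]
        have : 0 ≤ Real.log ζ := Real.log_nonneg h1
        rw [min_eq_left (by linarith), zero_mul, mul_zero]
    have hmin_int : IntegrableOn (fun ζ : ℝ => min 0 (2 * Real.log ζ) * (1 + ζ ^ 2)⁻¹)
        (Ioi 0) := by
      have hi : Integrable ((Ioo (0:ℝ) 1).indicator (fun t => (-Real.log t) / (1 + t ^ 2)))
          volume := (integrable_indicator_iff measurableSet_Ioo).2 aux_T_int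
      exact ((hi.const_mul (-2)).integrableOn).congr_fun
        (fun ζ hζ => (hmin_eq ζ hζ).symm) measurableSet_Ioi
    have hmin_val : (∫ ζ in Ioi (0:ℝ), min 0 (2 * Real.log ζ) * (1 + ζ ^ 2)⁻¹) = -2 * G := by
      rw [setIntegral_congr_fun measurableSet_Ioi hmin_eq, integral_const_mul,
        setIntegral_indicator measurableSet_Ioo,
        show Ioi (0:ℝ) ∩ Ioo 0 1 = Ioo 0 1 from inter_eq_right.mpr (fun t ht => ht.1), hT]
    -- combine
    have hub : (∫ ζ in Ioi (0:ℝ), (g ζ - c₀ * (1 + ζ ^ 2)⁻¹)) ≤ 2 * G := by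
      rw [← hmax_val]
      exact setIntegral_mono_on hdiff_int hmax_int measurableSet_Ioi
        (fun ζ hζ => (hkey ζ hζ).2)
    have hlb : -2 * G ≤ ∫ ζ in Ioi (0:ℝ), (g ζ - c₀ * (1 + ζ ^ 2)⁻¹) := by
      rw [← hmin_val]
      exact setIntegral_mono_on hmin_int hdiff_int measurableSet_Ioi
        (fun ζ hζ => (hkey ζ hζ).1)
    have hsplit : (∫ ζ in Ioi (0:ℝ), (g ζ - c₀ * (1 + ζ ^ 2)⁻¹)) =
        (∫ ζ in Ioi (0:ℝ), g ζ) - c₀ * (π / 2) := by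
      rw [integral_sub hg_int hconst_int, integral_const_mul,
        integral_Ioi_inv_one_add_sq, Real.arctan_zero, sub_zero]
    rw [hsplit] at hub hlb
    set J := ∫ ζ in Ioi (0:ℝ), g ζ with hJ
    have hsqrt : Real.sqrt (ψ (ξ ^ 2)) = Real.exp (c₀ / 2) := by
      rw [Real.sqrt_eq_rpow, Real.rpow_def_of_pos hψx]
      congr 1
      ring
    constructor
    · rw [hsqrt, ← Real.exp_add, Real.exp_le_exp]
      have h1 : (1 / π) * (c₀ * (π / 2) + (-2 * G)) = -2 * G / π + c₀ / 2 := by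
        field_simp
        ring
      have h2 : c₀ * (π / 2) + (-2 * G) ≤ J := by linarith
      calc -2 * G / π + c₀ / 2 = (1 / π) * (c₀ * (π / 2) + (-2 * G)) := h1.symm
        _ ≤ (1 / π) * J := by
            exact mul_le_mul_of_nonneg_left h2 (by positivity)
    · rw [hsqrt, ← Real.exp_add, Real.exp_le_exp]
      have h1 : (1 / π) * (c₀ * (π / 2) + 2 * G) = 2 * G / π + c₀ / 2 := by
        field_simp
        ring
      have h2 : J ≤ c₀ * (π / 2) + 2 * G := by linarith
      calc (1 / π) * J ≤ (1 / π) * (c₀ * (π / 2) + 2 * G) :=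
            mul_le_mul_of_nonneg_left h2 (by positivity)
        _ = 2 * G / π + c₀ / 2 := h1
  · have hGle := aux_G_le G hG
    have hlog2 := Real.log_two_gt_d9
    have hπ3 := Real.pi_gt_three
    have hle : 2 * G / π ≤ Real.log 2 := by
      rw [div_le_iff₀ hπ]
      nlinarith
    calc Real.exp (2 * G / π) ≤ Real.exp (Real.log 2) := Real.exp_le_exp.2 hle
      _ = 2 := Real.exp_log two_pos
end

section
/- Let ψ : (0,∞) → (0,∞) with ψ and ξ/ψ(ξ) nondecreasing, and suppose ψ is regularly varying at infinity with some index α, i.e., for each ζ > 0, ψ(ξζ)/ψ(ξ) → ζ^α as ξ → ∞. Define ψ†(ξ) = exp( (1/π) ∫₀^∞ log ψ(ξ²ζ²)/(1+ζ²) dζ ). Then ψ†(ξ)/√ψ(ξ²) → 1 as ξ → ∞. -/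
open MeasureTheory Real Set Filter

lemma log_le_two_mul_rpow {y : ℝ} (hy : 1 ≤ y) :
    Real.log y ≤ 2 * y ^ ((1:ℝ)/2) := by
  have hy0 : 0 < y := lt_of_lt_of_le one_pos hy
  have h1 : Real.log (y ^ ((1:ℝ)/2)) = (1/2) * Real.log y := Real.log_rpow hy0 _
  have h2 : Real.log (y ^ ((1:ℝ)/2)) ≤ y ^ ((1:ℝ)/2) - 1 :=
    Real.log_le_sub_one_of_pos (Real.rpow_pos_of_pos hy0 _)
  nlinarith [Real.rpow_pos_of_pos hy0 ((1:ℝ)/2)]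

lemma abs_log_le_Ioc {ζ : ℝ} (h0 : 0 < ζ) (h1 : ζ ≤ 1) :
    |Real.log ζ| ≤ 2 * ζ ^ (-(1:ℝ)/2) := by
  have h : |Real.log ζ| = Real.log ζ⁻¹ := by
    rw [Real.log_inv, abs_of_nonpos (Real.log_nonpos h0.le h1)]
  rw [h]
  have hmain := log_le_two_mul_rpow (y := ζ⁻¹) ((one_le_inv_iff₀).mpr ⟨h0, h1⟩)
  calc Real.log ζ⁻¹ ≤ 2 * (ζ⁻¹) ^ ((1:ℝ)/2) := hmain
    _ = 2 * ζ ^ (-(1:ℝ)/2) := by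
        rw [← Real.rpow_neg_one ζ, ← Real.rpow_mul h0.le]
        norm_num

lemma integrable_bound : IntegrableOn (fun ζ : ℝ => 2 * |Real.log ζ| / (1 + ζ^2)) (Ioi 0) := by
  have hcont : ∀ s : Set ℝ, s ⊆ Ioi 0 →
      ContinuousOn (fun ζ : ℝ => 2 * |Real.log ζ| / (1 + ζ^2)) s := by
    intro s hs
    apply ContinuousOn.div
    · exact (continuousOn_const.mul ((Real.continuousOn_log.mono
        (fun x hx => ne_of_gt (hs hx))).abs))
    · fun_prop
    · intro x _; positivity
  rw [← Ioc_union_Ioi_eq_Ioi (zero_le_one (α := ℝ))]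
  apply IntegrableOn.union
  · -- on Ioc 0 1 : bound by 4 ζ^(-1/2)
    have hint : IntegrableOn (fun ζ : ℝ => 4 * ζ ^ (-(1:ℝ)/2)) (Ioc 0 1) := by
      have h := (intervalIntegral.intervalIntegrable_rpow' (a := 0) (b := 1) (r := -(1:ℝ)/2) (by norm_num))
      rw [intervalIntegrable_iff_integrableOn_Ioc_of_le zero_le_one] at h
      exact h.const_mul 4
    apply Integrable.mono' hint
    · exact ((hcont _ (fun x hx => hx.1)).aestronglyMeasurable measurableSet_Ioc)
    · refine (ae_restrict_iff' measurableSet_Ioc).mpr (ae_of_all _ fun ζ hζ => ?_)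
      have h0 := hζ.1
      have habs := abs_log_le_Ioc h0 hζ.2
      rw [Real.norm_eq_abs, abs_div, abs_of_pos (by positivity : (0:ℝ) < 1 + ζ^2),
        abs_of_nonneg (by positivity : (0:ℝ) ≤ 2 * |Real.log ζ|)]
      calc 2 * |Real.log ζ| / (1 + ζ^2) ≤ 2 * |Real.log ζ| / 1 := by
            apply div_le_div_of_nonneg_left (by positivity) one_pos (by nlinarith)
        _ = 2 * |Real.log ζ| := by ring
        _ ≤ 2 * (2 * ζ ^ (-(1:ℝ)/2)) := by gcongr
        _ = 4 * ζ ^ (-(1:ℝ)/2) := by ring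
  · -- on Ioi 1 : bound by 4 ζ^(-3/2)
    have hint : IntegrableOn (fun ζ : ℝ => 4 * ζ ^ (-(3:ℝ)/2)) (Ioi 1) := by
      exact (integrableOn_Ioi_rpow_of_lt (by norm_num) one_pos).const_mul 4
    apply Integrable.mono' hint
    · exact ((hcont (Ioi 1) (fun x hx => mem_Ioi.2 (lt_trans one_pos (mem_Ioi.1 hx)))).aestronglyMeasurable measurableSet_Ioi)
    · refine (ae_restrict_iff' measurableSet_Ioi).mpr (ae_of_all _ fun ζ hζ => ?_)
      have h1 : (1:ℝ) < ζ := hζ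
      have h0 : (0:ℝ) < ζ := lt_trans one_pos h1
      have habs : |Real.log ζ| ≤ 2 * ζ ^ ((1:ℝ)/2) := by
        rw [abs_of_nonneg (Real.log_nonneg h1.le)]
        exact log_le_two_mul_rpow h1.le
      rw [Real.norm_eq_abs, abs_div, abs_of_pos (by positivity : (0:ℝ) < 1 + ζ^2),
        abs_of_nonneg (by positivity : (0:ℝ) ≤ 2 * |Real.log ζ|)]
      have hsq : (0:ℝ) < ζ^2 := by positivity
      calc 2 * |Real.log ζ| / (1 + ζ^2)
          ≤ 2 * (2 * ζ ^ ((1:ℝ)/2)) / (ζ^2) := by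
            apply div_le_div₀ (by positivity) (by linarith) hsq (by nlinarith)
        _ = 4 * (ζ ^ ((1:ℝ)/2) / ζ^2) := by ring
        _ = 4 * ζ ^ (-(3:ℝ)/2) := by
            congr 1
            rw [← Real.rpow_natCast ζ 2, ← Real.rpow_sub h0]
            norm_num

lemma integral_log_div_one_add_sq : ∫ ζ in Ioi (0:ℝ), Real.log ζ / (1 + ζ^2) = 0 := by
  have h := MeasureTheory.integral_comp_rpow_Ioi
    (fun y : ℝ => Real.log y / (1 + y^2)) (p := -1) (by norm_num)
  have h2 : ∫ x in Ioi (0:ℝ),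
      (|(-1:ℝ)| * x ^ ((-1:ℝ) - 1)) • ((fun y : ℝ => Real.log y / (1 + y^2)) (x ^ (-1:ℝ)))
      = ∫ x in Ioi (0:ℝ), -(Real.log x / (1 + x^2)) := by
    apply setIntegral_congr_fun measurableSet_Ioi
    intro x hx
    have hx0 : (0:ℝ) < x := hx
    have e1 : x ^ ((-1:ℝ) - 1) = (x^2)⁻¹ := by
      rw [show ((-1:ℝ) - 1) = -(2:ℕ) by norm_num]
      rw [Real.rpow_neg hx0.le, Real.rpow_natCast]
    have e2 : x ^ (-1:ℝ) = x⁻¹ := Real.rpow_neg_one x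
    simp only [e1, e2, smul_eq_mul, abs_neg, abs_one, one_mul, Real.log_inv, inv_pow]
    have hne1 : (1:ℝ) + (x^2)⁻¹ ≠ 0 := by positivity
    have hne2 : (1:ℝ) + x^2 ≠ 0 := by positivity
    field_simp
    ring
  rw [h2, integral_neg] at h
  linarith [h]

lemma log_ratio_bound {ψ : ℝ → ℝ} (hψ_pos : ∀ x, 0 < x → 0 < ψ x)
    (hψ_mono : MonotoneOn ψ (Ioi 0))
    (hψ_quot : MonotoneOn (fun x => x / ψ x) (Ioi 0)) :
    ∀ x, 0 < x → ∀ l, 0 < l →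
      |Real.log (ψ (l * x)) - Real.log (ψ x)| ≤ |Real.log l| := by
  have main : ∀ x, 0 < x → ∀ l, 1 ≤ l →
      |Real.log (ψ (l * x)) - Real.log (ψ x)| ≤ |Real.log l| := by
    intro x hx l hl
    have hl0 : 0 < l := lt_of_lt_of_le one_pos hl
    have hlx : 0 < l * x := mul_pos hl0 hx
    have hxle : x ≤ l * x := le_mul_of_one_le_left hx.le hl
    have h1 : ψ x ≤ ψ (l * x) := hψ_mono (mem_Ioi.2 hx) (mem_Ioi.2 hlx) hxle
    have hpx := hψ_pos x hx
    have hplx := hψ_pos _ hlx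
    have h2 : ψ (l * x) ≤ l * ψ x := by
      have hq := hψ_quot (mem_Ioi.2 hx) (mem_Ioi.2 hlx) hxle
      simp only at hq
      rw [div_le_div_iff₀ hpx hplx] at hq
      nlinarith
    have h3 : Real.log (ψ (l * x)) ≤ Real.log l + Real.log (ψ x) := by
      rw [← Real.log_mul hl0.ne' hpx.ne']
      exact Real.log_le_log hplx h2
    have h4 : Real.log (ψ x) ≤ Real.log (ψ (l * x)) := Real.log_le_log hpx h1
    have h5 : 0 ≤ Real.log l := Real.log_nonneg hl
    rw [abs_of_nonneg (by linarith), abs_of_nonneg h5]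
    linarith
  intro x hx l hl
  rcases le_or_gt 1 l with h | h
  · exact main x hx l h
  · have h1l : 1 ≤ l⁻¹ := (one_le_inv_iff₀).mpr ⟨hl, h.le⟩
    have h' := main (l * x) (mul_pos hl hx) l⁻¹ h1l
    rw [← mul_assoc, inv_mul_cancel₀ hl.ne', one_mul, Real.log_inv, abs_neg] at h'
    rw [abs_sub_comm]
    exact h'

theorem dagger_regular_variation
    (ψ : ℝ → ℝ) (α : ℝ) (hψ_pos : ∀ x, 0 < x → 0 < ψ x)
    (hψ_mono : MonotoneOn ψ (Ioi 0))
    (hψ_quot : MonotoneOn (fun x => x / ψ x) (Ioi 0))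
    (hψ_rv : ∀ ζ : ℝ, 0 < ζ →
      Tendsto (fun ξ => ψ (ξ * ζ) / ψ ξ) atTop (nhds (ζ ^ α))) :
    Tendsto (fun ξ : ℝ =>
        Real.exp ((1 / π) * ∫ ζ in Ioi (0:ℝ), Real.log (ψ (ξ ^ 2 * ζ ^ 2)) / (1 + ζ ^ 2))
          / Real.sqrt (ψ (ξ ^ 2)))
      atTop (nhds 1) := by
  have hπ : (0:ℝ) < π := Real.pi_pos
  set F : ℝ → ℝ → ℝ := fun ξ ζ =>
    (Real.log (ψ (ξ^2 * ζ^2)) - Real.log (ψ (ξ^2))) / (1 + ζ^2) with hF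
  have hmeas : ∀ ξ : ℝ, 0 < ξ →
      AEMeasurable (fun ζ => Real.log (ψ (ξ^2 * ζ^2))) (volume.restrict (Ioi 0)) := by
    intro ξ hξ
    have hmono : MonotoneOn (fun ζ : ℝ => ψ (ξ^2 * ζ^2)) (Ioi 0) := by
      intro a ha b hb hab
      have ha0 : (0:ℝ) < a := ha
      have hb0 : (0:ℝ) < b := hb
      exact hψ_mono (mem_Ioi.2 (by positivity)) (mem_Ioi.2 (by positivity))
        (mul_le_mul_of_nonneg_left (by nlinarith) (sq_nonneg ξ))
    exact Real.measurable_log.comp_aemeasurable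
      (aemeasurable_restrict_of_monotoneOn measurableSet_Ioi hmono)
  have hdenom : AEMeasurable (fun ζ : ℝ => 1 + ζ^2) (volume.restrict (Ioi 0)) := by fun_prop
  have hFmeas : ∀ ξ : ℝ, 0 < ξ →
      AEStronglyMeasurable (F ξ) (volume.restrict (Ioi 0)) := fun ξ hξ =>
    (((hmeas ξ hξ).sub aemeasurable_const).div hdenom).aestronglyMeasurable
  have hratio : ∀ ξ : ℝ, 0 < ξ → ∀ ζ : ℝ, 0 < ζ →
      |Real.log (ψ (ξ^2 * ζ^2)) - Real.log (ψ (ξ^2))| ≤ 2 * |Real.log ζ| := by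
    intro ξ hξ ζ hζ0
    have hx2 : (0:ℝ) < ξ^2 := by positivity
    have h := log_ratio_bound hψ_pos hψ_mono hψ_quot (ξ^2) hx2 (ζ^2) (by positivity)
    rw [mul_comm (ζ^2) (ξ^2)] at h
    have hlog : |Real.log (ζ^2)| = 2 * |Real.log ζ| := by
      rw [Real.log_pow]; push_cast; rw [abs_mul]; norm_num
    rw [hlog] at h
    exact h
  have hbound : ∀ ξ : ℝ, 0 < ξ → ∀ ζ ∈ Ioi (0:ℝ),
      ‖F ξ ζ‖ ≤ 2 * |Real.log ζ| / (1 + ζ^2) := by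
    intro ξ hξ ζ hζ
    have hζ0 : (0:ℝ) < ζ := hζ
    rw [Real.norm_eq_abs, hF]
    simp only
    rw [abs_div, abs_of_pos (by positivity : (0:ℝ) < 1 + ζ^2)]
    gcongr
    exact hratio ξ hξ ζ hζ0
  have hA_int : ∀ ξ : ℝ, 0 < ξ →
      IntegrableOn (fun ζ => Real.log (ψ (ξ^2 * ζ^2)) / (1 + ζ^2)) (Ioi 0) := by
    intro ξ hξ
    have h1 : IntegrableOn
        (fun ζ : ℝ => |Real.log (ψ (ξ^2))| * (1 + ζ^2)⁻¹) (Ioi 0) :=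
      (integrable_inv_one_add_sq.integrableOn).const_mul _
    apply Integrable.mono' (h1.add integrable_bound)
    · exact ((hmeas ξ hξ).div hdenom).aestronglyMeasurable
    · refine (ae_restrict_iff' measurableSet_Ioi).mpr (ae_of_all _ fun ζ hζ => ?_)
      have hζ0 : (0:ℝ) < ζ := hζ
      have htri : |Real.log (ψ (ξ^2 * ζ^2))|
          ≤ |Real.log (ψ (ξ^2))| + 2 * |Real.log ζ| := by
        have h := hratio ξ hξ ζ hζ0
        have h2 := abs_sub_abs_le_abs_sub (Real.log (ψ (ξ^2 * ζ^2))) (Real.log (ψ (ξ^2)))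
        linarith
      rw [Real.norm_eq_abs, abs_div, abs_of_pos (by positivity : (0:ℝ) < 1 + ζ^2)]
      calc |Real.log (ψ (ξ^2 * ζ^2))| / (1 + ζ^2)
          ≤ (|Real.log (ψ (ξ^2))| + 2 * |Real.log ζ|) / (1 + ζ^2) := by gcongr
        _ = |Real.log (ψ (ξ^2))| * (1 + ζ^2)⁻¹ + 2 * |Real.log ζ| / (1 + ζ^2) := by
            rw [add_div, div_eq_mul_inv]
  have hDCT : Tendsto (fun ξ => ∫ ζ in Ioi (0:ℝ), F ξ ζ) atTop
      (nhds (∫ ζ in Ioi (0:ℝ), (2*α) * (Real.log ζ / (1 + ζ^2)))) := by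
    apply tendsto_integral_filter_of_dominated_convergence
      (fun ζ => 2 * |Real.log ζ| / (1 + ζ^2))
    · filter_upwards [eventually_gt_atTop 0] with ξ hξ using hFmeas ξ hξ
    · filter_upwards [eventually_gt_atTop 0] with ξ hξ
      exact (ae_restrict_iff' measurableSet_Ioi).mpr (ae_of_all _ (hbound ξ hξ))
    · exact integrable_bound
    · refine (ae_restrict_iff' measurableSet_Ioi).mpr (ae_of_all _ fun ζ hζ => ?_)
      have hζ0 : (0:ℝ) < ζ := hζ
      have h1 := hψ_rv (ζ^2) (by positivity)
      have h2 : Tendsto (fun ξ : ℝ => ξ^2) atTop atTop :=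
        tendsto_pow_atTop two_ne_zero
      have h3 := h1.comp h2
      have h4 : (0:ℝ) < (ζ^2) ^ α := Real.rpow_pos_of_pos (by positivity) α
      have h5 := (Real.continuousAt_log h4.ne').tendsto.comp h3
      have h6 : Real.log ((ζ^2) ^ α) = α * (2 * Real.log ζ) := by
        rw [Real.log_rpow (by positivity), Real.log_pow]; push_cast; ring
      have h7 : Tendsto (fun ξ : ℝ => Real.log (ψ (ξ^2 * ζ^2)) - Real.log (ψ (ξ^2)))
          atTop (nhds (α * (2 * Real.log ζ))) := by
        rw [← h6]
        apply h5.congr'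
        filter_upwards [eventually_gt_atTop 0] with ξ hξ
        simp only [Function.comp]
        rw [Real.log_div (hψ_pos _ (by positivity)).ne' (hψ_pos _ (by positivity)).ne']
      have h8 := h7.div_const (1 + ζ^2)
      convert h8 using 2
      ring
  have hint0 : ∫ ζ in Ioi (0:ℝ), (2*α) * (Real.log ζ / (1 + ζ^2)) = 0 := by
    rw [MeasureTheory.integral_const_mul, integral_log_div_one_add_sq, mul_zero]
  have key : Tendsto (fun ξ => Real.exp ((1/π) * ∫ ζ in Ioi (0:ℝ), F ξ ζ)) atTop (nhds 1) := by
    rw [hint0] at hDCT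
    have h0 : Tendsto (fun ξ => (1/π) * ∫ ζ in Ioi (0:ℝ), F ξ ζ) atTop (nhds 0) := by
      simpa using hDCT.const_mul (1/π)
    have := (Real.continuous_exp.tendsto 0).comp h0
    simpa [Function.comp_def] using this
  apply key.congr'
  filter_upwards [eventually_gt_atTop 0] with ξ hξ
  have hx2 : (0:ℝ) < ξ^2 := by positivity
  have hψx := hψ_pos _ hx2
  have hAint := hA_int ξ hξ
  have hBint : IntegrableOn (fun ζ : ℝ => Real.log (ψ (ξ^2)) * (1+ζ^2)⁻¹) (Ioi 0) :=
    (integrable_inv_one_add_sq.integrableOn).const_mul _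
  have hsplit : ∫ ζ in Ioi (0:ℝ), F ξ ζ
      = (∫ ζ in Ioi (0:ℝ), Real.log (ψ (ξ^2 * ζ^2)) / (1 + ζ^2))
        - Real.log (ψ (ξ^2)) * (π/2) := by
    have h1 : ∀ ζ : ℝ, F ξ ζ
        = Real.log (ψ (ξ^2 * ζ^2)) / (1 + ζ^2) - Real.log (ψ (ξ^2)) * (1 + ζ^2)⁻¹ := by
      intro ζ
      rw [hF]
      simp only
      ring
    simp only [h1]
    rw [integral_sub hAint hBint, MeasureTheory.integral_const_mul,
      integral_Ioi_inv_one_add_sq, Real.arctan_zero, sub_zero]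
  rw [hsplit]
  have hsqrt : Real.sqrt (ψ (ξ^2)) = Real.exp (Real.log (ψ (ξ^2)) * (1/2)) := by
    rw [Real.sqrt_eq_rpow, Real.rpow_def_of_pos hψx]
  rw [hsqrt, ← Real.exp_sub]
  congr 1
  field_simp
end

section
/- For λ > 0 and ξ > 0, (1/π) ∫₀^∞ ξ·log|1 − ζ²/λ²| / (ξ² + ζ²) dζ = (1/2)·log(1 + ξ²/λ²). -/
open MeasureTheory Real Set Filter
open scoped Topology


lemma tendsto_arctan_div (c d : ℝ) (hc : 0 < c) :
    Tendsto (fun s : ℝ => arctan ((s + d) / c)) atTop (𝓝 (π / 2)) := by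
  have h1 : Tendsto (fun s : ℝ => (s + d) / c) atTop atTop :=
    (tendsto_atTop_add_const_right _ d tendsto_id).atTop_div_const hc
  exact (Real.tendsto_arctan_atTop.mono_right nhdsWithin_le_nhds).comp h1

lemma tendsto_ratio (p q c d : ℝ) (hc : 0 ≤ c) :
    Tendsto (fun x : ℝ => (p + (x + q) ^ 2) / (c + (x + d) ^ 2)) atTop (𝓝 1) := by
  have hcont : ContinuousAt
      (fun u : ℝ => (p * u ^ 2 + (1 + q * u) ^ 2) / (c * u ^ 2 + (1 + d * u) ^ 2)) 0 := by
    apply ContinuousAt.div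
    · fun_prop
    · fun_prop
    · norm_num
  have h0 : Tendsto (fun x : ℝ => x⁻¹) atTop (𝓝 (0:ℝ)) := tendsto_inv_atTop_zero
  have h1 := (hcont.tendsto.comp h0)
  simp only [Function.comp_def] at h1
  norm_num at h1
  refine h1.congr' ?_
  filter_upwards [eventually_gt_atTop (max 1 (1 - d)), eventually_gt_atTop 0] with x hx hx0
  have hden : 0 < c + (x + d) ^ 2 := by
    have : 1 - d < x := lt_of_le_of_lt (le_max_right _ _) hx
    nlinarith
  field_simp

lemma tendsto_log_sub {α : Type*} {l : Filter α} {f g : α → ℝ}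
    (h : Tendsto (fun x => f x / g x) l (𝓝 1))
    (hf : ∀ᶠ x in l, 0 < f x) (hg : ∀ᶠ x in l, 0 < g x) :
    Tendsto (fun x => Real.log (f x) - Real.log (g x)) l (𝓝 0) := by
  have hcont := (Real.continuousAt_log one_ne_zero).tendsto.comp h
  rw [Real.log_one] at hcont
  refine hcont.congr' ?_
  filter_upwards [hf, hg] with x h1 h2
  simp [Function.comp, Real.log_div h1.ne' h2.ne']

lemma hasDerivAt_J (a t : ℝ) (ha : 0 < a) (ht : 0 < t) (s : ℝ) :
    HasDerivAt (fun s : ℝ =>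
      (4 * t * (t ^ 2 + 1 - a ^ 2) / (((a + t) ^ 2 + 1) * ((a - t) ^ 2 + 1))) * arctan (s / a)
      + (2 * a * (a ^ 2 + 1 - t ^ 2) / (((a + t) ^ 2 + 1) * ((a - t) ^ 2 + 1)))
          * (arctan ((s - 1) / t) + arctan ((s + 1) / t))
      - (2 * a * t / (((a + t) ^ 2 + 1) * ((a - t) ^ 2 + 1)))
          * (Real.log (t ^ 2 + (s - 1) ^ 2) - Real.log (t ^ 2 + (s + 1) ^ 2)))
      (a * (2 * t / (t ^ 2 + (s - 1) ^ 2) + 2 * t / (t ^ 2 + (s + 1) ^ 2)) / (a ^ 2 + s ^ 2)) s := by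
  have hΔ : 0 < ((a + t) ^ 2 + 1) * ((a - t) ^ 2 + 1) := by positivity
  have hd1 : (0:ℝ) < t ^ 2 + (s - 1) ^ 2 := by positivity
  have hd2 : (0:ℝ) < t ^ 2 + (s + 1) ^ 2 := by positivity
  have h1 : HasDerivAt (fun s : ℝ => arctan (s / a)) ((1 + (s / a) ^ 2)⁻¹ * (1 / a)) s := by
    simpa [Function.comp_def] using (Real.hasDerivAt_arctan' (s / a)).comp s ((hasDerivAt_id s).div_const a)
  have h2 : HasDerivAt (fun s : ℝ => arctan ((s - 1) / t)) ((1 + ((s - 1) / t) ^ 2)⁻¹ * (1 / t)) s := by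
    simpa [Function.comp_def] using (Real.hasDerivAt_arctan' ((s - 1) / t)).comp s
      (((hasDerivAt_id s).sub_const 1).div_const t)
  have h3 : HasDerivAt (fun s : ℝ => arctan ((s + 1) / t)) ((1 + ((s + 1) / t) ^ 2)⁻¹ * (1 / t)) s := by
    simpa [Function.comp_def] using (Real.hasDerivAt_arctan' ((s + 1) / t)).comp s
      (((hasDerivAt_id s).add_const 1).div_const t)
  have h4 : HasDerivAt (fun s : ℝ => Real.log (t ^ 2 + (s - 1) ^ 2))
      ((t ^ 2 + (s - 1) ^ 2)⁻¹ * (2 * (s - 1))) s := by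
    have hin : HasDerivAt (fun s : ℝ => t ^ 2 + (s - 1) ^ 2) (2 * (s - 1)) s := by
      simpa using (((hasDerivAt_id s).sub_const 1).pow 2).const_add (t ^ 2)
    exact (Real.hasDerivAt_log hd1.ne').comp s hin
  have h5 : HasDerivAt (fun s : ℝ => Real.log (t ^ 2 + (s + 1) ^ 2))
      ((t ^ 2 + (s + 1) ^ 2)⁻¹ * (2 * (s + 1))) s := by
    have hin : HasDerivAt (fun s : ℝ => t ^ 2 + (s + 1) ^ 2) (2 * (s + 1)) s := by
      simpa using (((hasDerivAt_id s).add_const 1).pow 2).const_add (t ^ 2)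
    exact (Real.hasDerivAt_log hd2.ne').comp s hin
  have H := ((h1.const_mul (4 * t * (t ^ 2 + 1 - a ^ 2) / (((a + t) ^ 2 + 1) * ((a - t) ^ 2 + 1)))).add
      ((h2.add h3).const_mul (2 * a * (a ^ 2 + 1 - t ^ 2) / (((a + t) ^ 2 + 1) * ((a - t) ^ 2 + 1))))).sub
      ((h4.sub h5).const_mul (2 * a * t / (((a + t) ^ 2 + 1) * ((a - t) ^ 2 + 1))))
  refine H.congr_deriv ?_
  have has : (0:ℝ) < a ^ 2 + s ^ 2 := by positivity
  field_simp
  ring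

lemma J_lemma {a t : ℝ} (ha : 0 < a) (ht : 0 < t) :
    IntegrableOn (fun s => a * (2 * t / (t ^ 2 + (s - 1) ^ 2) + 2 * t / (t ^ 2 + (s + 1) ^ 2))
        / (a ^ 2 + s ^ 2)) (Ioi (0:ℝ))
    ∧ ∫ s in Ioi (0:ℝ), a * (2 * t / (t ^ 2 + (s - 1) ^ 2) + 2 * t / (t ^ 2 + (s + 1) ^ 2))
        / (a ^ 2 + s ^ 2) = 2 * π * (a + t) / (1 + (a + t) ^ 2) := by
  have hΔ : 0 < ((a + t) ^ 2 + 1) * ((a - t) ^ 2 + 1) := by positivity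
  set c1 := 4 * t * (t ^ 2 + 1 - a ^ 2) / (((a + t) ^ 2 + 1) * ((a - t) ^ 2 + 1)) with hc1
  set c2 := 2 * a * (a ^ 2 + 1 - t ^ 2) / (((a + t) ^ 2 + 1) * ((a - t) ^ 2 + 1)) with hc2
  set c3 := 2 * a * t / (((a + t) ^ 2 + 1) * ((a - t) ^ 2 + 1)) with hc3
  set F : ℝ → ℝ := fun s => c1 * arctan (s / a) + c2 * (arctan ((s - 1) / t) + arctan ((s + 1) / t))
      - c3 * (Real.log (t ^ 2 + (s - 1) ^ 2) - Real.log (t ^ 2 + (s + 1) ^ 2)) with hF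
  have hderiv : ∀ s ∈ Ici (0:ℝ), HasDerivAt F
      (a * (2 * t / (t ^ 2 + (s - 1) ^ 2) + 2 * t / (t ^ 2 + (s + 1) ^ 2)) / (a ^ 2 + s ^ 2)) s :=
    fun s _ => hasDerivAt_J a t ha ht s
  have hpos : ∀ s ∈ Ioi (0:ℝ),
      0 ≤ a * (2 * t / (t ^ 2 + (s - 1) ^ 2) + 2 * t / (t ^ 2 + (s + 1) ^ 2)) / (a ^ 2 + s ^ 2) := by
    intro s _; positivity
  have hlim : Tendsto F atTop (𝓝 (c1 * (π / 2) + c2 * π)) := by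
    have T1 : Tendsto (fun s : ℝ => arctan (s / a)) atTop (𝓝 (π / 2)) := by
      simpa using tendsto_arctan_div a 0 ha
    have T2 : Tendsto (fun s : ℝ => arctan ((s - 1) / t)) atTop (𝓝 (π / 2)) := by
      simpa [sub_eq_add_neg] using tendsto_arctan_div t (-1) ht
    have T3 : Tendsto (fun s : ℝ => arctan ((s + 1) / t)) atTop (𝓝 (π / 2)) := by
      simpa using tendsto_arctan_div t 1 ht
    have T4 : Tendsto (fun s : ℝ => Real.log (t ^ 2 + (s - 1) ^ 2) - Real.log (t ^ 2 + (s + 1) ^ 2))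
        atTop (𝓝 0) := by
      apply tendsto_log_sub
      · have := tendsto_ratio (t ^ 2) (-1) (t ^ 2) 1 (by positivity)
        refine this.congr fun x => by ring_nf
      · filter_upwards with x; positivity
      · filter_upwards with x; positivity
    have h := ((T1.const_mul c1).add ((T2.add T3).const_mul c2)).sub (T4.const_mul c3)
    have : c1 * (π / 2) + c2 * (π / 2 + π / 2) - c3 * 0 = c1 * (π / 2) + c2 * π := by ring
    rw [this] at h
    exact h
  constructor
  · exact integrableOn_Ioi_deriv_of_nonneg (((hasDerivAt_J a t ha ht 0)).continuousAt.continuousWithinAt) (fun s hs => hasDerivAt_J a t ha ht s) hpos hlim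
  · rw [integral_Ioi_of_hasDerivAt_of_nonneg ((hasDerivAt_J a t ha ht 0)).continuousAt.continuousWithinAt (fun s hs => hasDerivAt_J a t ha ht s) hpos hlim]
    rw [show ((0:ℝ) - 1) / t = -(1 / t) by ring, show ((0:ℝ) + 1) / t = 1 / t by ring,
      Real.arctan_neg]
    norm_num [Real.arctan_zero]
    rw [hc1, hc2]
    field_simp
    ring

lemma base_lemma {a : ℝ} (ha : 0 < a) :
    IntegrableOn (fun s => a / (a ^ 2 + s ^ 2)) (Ioi (0:ℝ))
    ∧ ∫ s in Ioi (0:ℝ), a / (a ^ 2 + s ^ 2) = π / 2 := by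
  have hderiv : ∀ s : ℝ, HasDerivAt (fun s : ℝ => arctan (s / a)) (a / (a ^ 2 + s ^ 2)) s := by
    intro s
    have h1 : HasDerivAt (fun s : ℝ => arctan (s / a)) ((1 + (s / a) ^ 2)⁻¹ * (1 / a)) s := by
      simpa [Function.comp_def] using (Real.hasDerivAt_arctan' (s / a)).comp s ((hasDerivAt_id s).div_const a)
    convert h1 using 1
    have h2 : (0:ℝ) < 1 + (s / a) ^ 2 := by positivity
    field_simp
  have hpos : ∀ s ∈ Ioi (0:ℝ), 0 ≤ a / (a ^ 2 + s ^ 2) := fun s _ => by positivity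
  have hlim : Tendsto (fun s : ℝ => arctan (s / a)) atTop (𝓝 (π / 2)) := by
    simpa using tendsto_arctan_div a 0 ha
  refine ⟨integrableOn_Ioi_deriv_of_nonneg (hderiv 0).continuousAt.continuousWithinAt
    (fun s _ => hderiv s) hpos hlim, ?_⟩
  rw [integral_Ioi_of_hasDerivAt_of_nonneg (hderiv 0).continuousAt.continuousWithinAt
    (fun s _ => hderiv s) hpos hlim]
  norm_num

lemma abs_log_le {u : ℝ} (hu : 0 < u) (hu1 : u ≤ 1) : |Real.log u| ≤ 2 * u ^ (-(1:ℝ)/2) := by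
  have hl : Real.log u ≤ 0 := Real.log_nonpos hu.le hu1
  rw [abs_of_nonpos hl]
  have h1 : Real.log (u ^ (-(1:ℝ)/2)) = (-(1:ℝ)/2) * Real.log u := Real.log_rpow hu _
  have h2 : Real.log (u ^ (-(1:ℝ)/2)) ≤ u ^ (-(1:ℝ)/2) - 1 :=
    Real.log_le_sub_one_of_pos (by positivity)
  nlinarith [Real.rpow_nonneg hu.le (-(1:ℝ)/2)]

lemma log_le_rpow {s : ℝ} (hs : 1 ≤ s) : Real.log s ≤ 2 * s ^ ((1:ℝ)/2) := by
  have h1 : Real.log (s ^ ((1:ℝ)/2)) = ((1:ℝ)/2) * Real.log s := Real.log_rpow (by linarith) _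
  have h2 : Real.log (s ^ ((1:ℝ)/2)) ≤ s ^ ((1:ℝ)/2) - 1 :=
    Real.log_le_sub_one_of_pos (by positivity)
  nlinarith [Real.rpow_nonneg (by linarith : (0:ℝ) ≤ s) ((1:ℝ)/2)]

-- tail integrability tool
lemma integrableOn_of_bound_rpow {f : ℝ → ℝ} {C : ℝ}
    (hm : AEStronglyMeasurable f (volume.restrict (Ioi 2)))
    (h : ∀ s ∈ Ioi (2:ℝ), |f s| ≤ C * s ^ (-(3:ℝ)/2)) : IntegrableOn f (Ioi (2:ℝ)) := by
  have hg : IntegrableOn (fun s : ℝ => C * s ^ (-(3:ℝ)/2)) (Ioi 2) :=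
    (integrableOn_Ioi_rpow_of_lt (by norm_num) (by norm_num)).const_mul C
  refine Integrable.mono' hg hm ?_
  rw [ae_restrict_iff' measurableSet_Ioi]
  filter_upwards with s hs
  exact h s hs

lemma integrableOn_absdist_rpow : IntegrableOn (fun s : ℝ => |s - 1| ^ (-(1:ℝ)/2)) (Ioc (0:ℝ) 2) := by
  have h1 : IntervalIntegrable (fun x : ℝ => x ^ (-(1:ℝ)/2)) volume (-1) 1 :=
    intervalIntegral.intervalIntegrable_rpow' (by norm_num)
  have h2 : IntervalIntegrable (fun x : ℝ => (1 - x) ^ (-(1:ℝ)/2)) volume 0 2 := by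
    have := h1.comp_sub_left 1
    norm_num at this ⊢
    exact this.symm
  have h3 : IntervalIntegrable (fun x : ℝ => (x - 1) ^ (-(1:ℝ)/2)) volume 0 2 := by
    have := h1.comp_sub_right 1
    norm_num at this ⊢
    exact this
  have h2' : IntegrableOn (fun x : ℝ => (1 - x) ^ (-(1:ℝ)/2)) (Ioc (0:ℝ) 1) :=
    ((intervalIntegrable_iff_integrableOn_Ioc_of_le (by norm_num)).mp h2).mono_set
      (Ioc_subset_Ioc le_rfl (by norm_num))
  have h3' : IntegrableOn (fun x : ℝ => (x - 1) ^ (-(1:ℝ)/2)) (Ioc (1:ℝ) 2) :=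
    ((intervalIntegrable_iff_integrableOn_Ioc_of_le (by norm_num)).mp h3).mono_set
      (Ioc_subset_Ioc (by norm_num) le_rfl)
  have e1 : IntegrableOn (fun s : ℝ => |s - 1| ^ (-(1:ℝ)/2)) (Ioc (0:ℝ) 1) := by
    refine h2'.congr_fun (fun s hs => ?_) measurableSet_Ioc
    rw [abs_of_nonpos (by simp [hs.2] : s - 1 ≤ 0), neg_sub]
  have e2 : IntegrableOn (fun s : ℝ => |s - 1| ^ (-(1:ℝ)/2)) (Ioc (1:ℝ) 2) := by
    refine h3'.congr_fun (fun s hs => ?_) measurableSet_Ioc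
    rw [abs_of_nonneg (by simp [hs.1.le] : (0:ℝ) ≤ s - 1)]
  have := e1.union e2
  rwa [Ioc_union_Ioc_eq_Ioc (by norm_num) (by norm_num)] at this

lemma intA {a : ℝ} (ha : 0 < a) :
    IntegrableOn (fun s : ℝ => Real.log (1 + s) / (a ^ 2 + s ^ 2)) (Ioi (0:ℝ)) := by
  rw [← Ioc_union_Ioi_eq_Ioi (by norm_num : (0:ℝ) ≤ 2)]
  refine IntegrableOn.union ?_ ?_
  · have hc : ContinuousOn (fun s : ℝ => Real.log (1 + s) / (a ^ 2 + s ^ 2)) (Icc 0 2) := by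
      refine ContinuousOn.div ?_ (by fun_prop) ?_
      · refine ContinuousOn.log (by fun_prop) ?_
        intro x hx; have := hx.1; positivity
      · intro x _; positivity
    exact (hc.integrableOn_compact isCompact_Icc).mono_set Ioc_subset_Icc_self
  · refine integrableOn_of_bound_rpow (C := 4) ?_ ?_
    · refine (Measurable.aestronglyMeasurable ?_)
      exact (Real.measurable_log.comp (measurable_const.add measurable_id)).div
        (measurable_const.add (measurable_id.pow_const 2))
    · intro s hs
      have hs2 : (2:ℝ) < s := hs
      have hs0 : (0:ℝ) < s := by linarith
      have hlog : Real.log (1 + s) ≤ 4 * s ^ ((1:ℝ)/2) := by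
        have h1 : Real.log (1 + s) ≤ Real.log (s ^ 2) := by
          apply Real.log_le_log (by linarith)
          nlinarith
        rw [Real.log_pow] at h1
        have h2 : Real.log s ≤ 2 * s ^ ((1:ℝ)/2) := log_le_rpow (by linarith)
        push_cast at h1
        nlinarith
      have hrpow : s ^ (-(3:ℝ)/2) = s ^ ((1:ℝ)/2) / s ^ 2 := by
        rw [show (-(3:ℝ)/2) = (1:ℝ)/2 - ((2:ℕ):ℝ) by norm_num, Real.rpow_sub hs0,
          Real.rpow_natCast]
      have hnn : 0 ≤ Real.log (1 + s) := Real.log_nonneg (by linarith)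
      have hss : s ^ 2 ≤ a ^ 2 + s ^ 2 := by nlinarith
      rw [abs_of_nonneg (by positivity), hrpow]
      calc Real.log (1 + s) / (a ^ 2 + s ^ 2) ≤ (4 * s ^ ((1:ℝ)/2)) / s ^ 2 :=
            div_le_div₀ (by positivity) hlog (by positivity) hss
        _ = 4 * (s ^ ((1:ℝ)/2) / s ^ 2) := by ring

lemma intB {a : ℝ} (ha : 0 < a) :
    IntegrableOn (fun s : ℝ => a * (Real.log ((s - 1) ^ 2) + Real.log ((s + 1) ^ 2))
      / (a ^ 2 + s ^ 2)) (Ioi (0:ℝ)) := by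
  have hmeas : Measurable (fun s : ℝ => a * (Real.log ((s - 1) ^ 2) + Real.log ((s + 1) ^ 2))
      / (a ^ 2 + s ^ 2)) := by
    refine Measurable.div ?_ (by fun_prop)
    refine Measurable.const_mul (Measurable.add ?_ ?_) a
    · exact Real.measurable_log.comp ((measurable_id.sub_const 1).pow_const 2)
    · exact Real.measurable_log.comp ((measurable_id.add_const 1).pow_const 2)
  rw [← Ioc_union_Ioi_eq_Ioi (by norm_num : (0:ℝ) ≤ 2)]
  refine IntegrableOn.union ?_ ?_
  · -- Ioc 0 2 : dominated by (1/a) * (4 * |s-1|^(-1/2) + 2 * log 9)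
    have hbint : IntegrableOn
        (fun s : ℝ => (1 / a) * (4 * |s - 1| ^ (-(1:ℝ)/2) + Real.log 9)) (Ioc (0:ℝ) 2) := by
      refine Integrable.const_mul ?_ _
      exact ((integrableOn_absdist_rpow.const_mul 4).add (integrableOn_const
        (by simp [Real.volume_Ioc])))
    refine Integrable.mono' hbint hmeas.aestronglyMeasurable ?_
    have hae : ∀ᵐ s : ℝ, s ≠ 1 := by
      refine (ae_iff).mpr ?_
      have h : {s : ℝ | ¬ s ≠ 1} = {1} := by ext x; simp
      rw [h]; exact Real.volume_singleton
    rw [ae_restrict_iff' measurableSet_Ioc]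
    filter_upwards [hae] with s hs1 hs
    obtain ⟨hs0, hs2⟩ := hs
    have hlog9 : (0:ℝ) ≤ Real.log 9 := Real.log_nonneg (by norm_num)
    have habs1 : |Real.log ((s - 1) ^ 2)| ≤ 4 * |s - 1| ^ (-(1:ℝ)/2) := by
      have e : Real.log ((s - 1) ^ 2) = 2 * Real.log |s - 1| := by
        rw [Real.log_abs, Real.log_pow]; push_cast; ring
      have hu : 0 < |s - 1| := abs_pos.mpr (sub_ne_zero.mpr hs1)
      have hu1 : |s - 1| ≤ 1 := abs_le.mpr ⟨by linarith, by linarith⟩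
      have := abs_log_le hu hu1
      rw [e, abs_mul, abs_two]
      linarith [abs_nonneg (Real.log |s - 1|)]
    have habs2 : |Real.log ((s + 1) ^ 2)| ≤ Real.log 9 := by
      have e : Real.log ((s + 1) ^ 2) = 2 * Real.log (s + 1) := by
        rw [Real.log_pow]; push_cast; ring
      have h0 : 0 ≤ Real.log (s + 1) := Real.log_nonneg (by linarith)
      have h3 : Real.log (s + 1) ≤ Real.log 3 := Real.log_le_log (by linarith) (by linarith)
      have h9 : Real.log 9 = 2 * Real.log 3 := by
        rw [show (9:ℝ) = 3 ^ 2 by norm_num, Real.log_pow]; push_cast; ring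
      rw [e, abs_of_nonneg (by linarith)]; linarith
    have hden : a ^ 2 ≤ a ^ 2 + s ^ 2 := by nlinarith
    have h4 : |Real.log ((s - 1) ^ 2) + Real.log ((s + 1) ^ 2)|
        ≤ 4 * |s - 1| ^ (-(1:ℝ)/2) + Real.log 9 :=
      (abs_add_le _ _).trans (by linarith)
    have hnorm : ‖a * (Real.log ((s - 1) ^ 2) + Real.log ((s + 1) ^ 2)) / (a ^ 2 + s ^ 2)‖
        = a * |Real.log ((s - 1) ^ 2) + Real.log ((s + 1) ^ 2)| / (a ^ 2 + s ^ 2) := by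
      rw [Real.norm_eq_abs, abs_div, abs_of_pos (by positivity : (0:ℝ) < a ^ 2 + s ^ 2),
        abs_mul, abs_of_pos ha]
    rw [hnorm]
    have hC : 0 ≤ 4 * |s - 1| ^ (-(1:ℝ)/2) + Real.log 9 := by positivity
    calc a * |Real.log ((s - 1) ^ 2) + Real.log ((s + 1) ^ 2)| / (a ^ 2 + s ^ 2)
        ≤ a * (4 * |s - 1| ^ (-(1:ℝ)/2) + Real.log 9) / a ^ 2 :=
          div_le_div₀ (by positivity) (mul_le_mul_of_nonneg_left h4 ha.le) (by positivity) hden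
      _ = (1 / a) * (4 * |s - 1| ^ (-(1:ℝ)/2) + Real.log 9) := by
          field_simp
  · refine integrableOn_of_bound_rpow (C := 16 * a) hmeas.aestronglyMeasurable ?_
    intro s hs
    have hs2 : (2:ℝ) < s := hs
    have hs0 : (0:ℝ) < s := by linarith
    have hl1 : Real.log ((s - 1) ^ 2) ≤ Real.log ((s + 1) ^ 2) :=
      Real.log_le_log (by nlinarith) (by nlinarith)
    have hl0 : 0 ≤ Real.log ((s - 1) ^ 2) := Real.log_nonneg (by nlinarith)
    have hlog : Real.log ((s + 1) ^ 2) ≤ 8 * s ^ ((1:ℝ)/2) := by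
      have e : Real.log ((s + 1) ^ 2) = 2 * Real.log (s + 1) := by
        rw [Real.log_pow]; push_cast; ring
      have h1 : Real.log (s + 1) ≤ Real.log (s ^ 2) := Real.log_le_log (by linarith) (by nlinarith)
      have e2 : Real.log (s ^ 2) = 2 * Real.log s := by rw [Real.log_pow]; push_cast; ring
      have h2 : Real.log s ≤ 2 * s ^ ((1:ℝ)/2) := log_le_rpow (by linarith)
      rw [e]; rw [e2] at h1; nlinarith
    have hrpow : s ^ (-(3:ℝ)/2) = s ^ ((1:ℝ)/2) / s ^ 2 := by
      rw [show (-(3:ℝ)/2) = (1:ℝ)/2 - ((2:ℕ):ℝ) by norm_num, Real.rpow_sub hs0,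
        Real.rpow_natCast]
    have hss : s ^ 2 ≤ a ^ 2 + s ^ 2 := by nlinarith
    have hnn : 0 ≤ a * (Real.log ((s - 1) ^ 2) + Real.log ((s + 1) ^ 2)) / (a ^ 2 + s ^ 2) := by
      apply div_nonneg _ (by positivity)
      apply mul_nonneg ha.le
      linarith [le_trans hl0 hl1]
    rw [abs_of_nonneg hnn, hrpow]
    calc a * (Real.log ((s - 1) ^ 2) + Real.log ((s + 1) ^ 2)) / (a ^ 2 + s ^ 2)
        ≤ (a * (16 * s ^ ((1:ℝ)/2))) / s ^ 2 := by
          refine div_le_div₀ (by positivity) ?_ (by positivity) hss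
          nlinarith
      _ = 16 * a * (s ^ ((1:ℝ)/2) / s ^ 2) := by ring

lemma step_fubini {a b : ℝ} (ha : 0 < a) (hb : 0 < b) :
    IntegrableOn (fun s : ℝ => a * (Real.log (b ^ 2 + (s - 1) ^ 2) + Real.log (b ^ 2 + (s + 1) ^ 2))
      / (a ^ 2 + s ^ 2)) (Ioi (0:ℝ))
    ∧ ∫ s in Ioi (0:ℝ), a * (Real.log (b ^ 2 + (s - 1) ^ 2) + Real.log (b ^ 2 + (s + 1) ^ 2))
      / (a ^ 2 + s ^ 2)
      = (∫ s in Ioi (0:ℝ), a * (Real.log ((s - 1) ^ 2) + Real.log ((s + 1) ^ 2)) / (a ^ 2 + s ^ 2))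
        + (π * Real.log (1 + (a + b) ^ 2) - π * Real.log (1 + a ^ 2)) := by
  set k : ℝ → ℝ → ℝ := fun t s => a * (2 * t / (t ^ 2 + (s - 1) ^ 2) + 2 * t / (t ^ 2 + (s + 1) ^ 2))
      / (a ^ 2 + s ^ 2) with hk
  have hkmeas : Measurable (Function.uncurry k) := by fun_prop
  -- product integrability
  have hprod : Integrable (Function.uncurry k)
      ((volume.restrict (Ioc (0:ℝ) b)).prod (volume.restrict (Ioi (0:ℝ)))) := by
    rw [integrable_prod_iff hkmeas.aestronglyMeasurable]
    constructor
    · rw [ae_restrict_iff' measurableSet_Ioc]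
      filter_upwards with t ht
      exact (J_lemma ha ht.1).1
    · have hcongr : ∀ᵐ t ∂(volume.restrict (Ioc (0:ℝ) b)),
          (∫ s in Ioi (0:ℝ), ‖k t s‖) = 2 * π * (a + t) / (1 + (a + t) ^ 2) := by
        rw [ae_restrict_iff' measurableSet_Ioc]
        filter_upwards with t ht
        rw [← (J_lemma ha ht.1).2]
        refine setIntegral_congr_fun measurableSet_Ioi (fun s hs => ?_)
        have ht0 := ht.1
        have hs0 : (0:ℝ) < s := hs
        rw [Real.norm_eq_abs, abs_of_nonneg (by positivity)]
      have hcont : Continuous (fun t : ℝ => 2 * π * (a + t) / (1 + (a + t) ^ 2)) := by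
        apply Continuous.div (by fun_prop) (by fun_prop)
        intro t; positivity
      refine Integrable.congr ((hcont.integrableOn_Icc).mono_set Ioc_subset_Icc_self) ?_
      filter_upwards [hcongr] with t ht
      exact ht.symm
  have hswap := integral_integral_swap (f := k) hprod
  -- LHS of swap : ∫ t ∫ s = interval integral value
  have hleft : (∫ t in Ioc (0:ℝ) b, ∫ s in Ioi (0:ℝ), k t s)
      = π * Real.log (1 + (a + b) ^ 2) - π * Real.log (1 + a ^ 2) := by
    have h1 : (∫ t in Ioc (0:ℝ) b, ∫ s in Ioi (0:ℝ), k t s)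
        = ∫ t in Ioc (0:ℝ) b, 2 * π * (a + t) / (1 + (a + t) ^ 2) := by
      refine setIntegral_congr_fun measurableSet_Ioc (fun t ht => ?_)
      exact (J_lemma ha ht.1).2
    rw [h1, ← intervalIntegral.integral_of_le hb.le]
    have hderiv : ∀ t ∈ uIcc (0:ℝ) b, HasDerivAt (fun t : ℝ => π * Real.log (1 + (a + t) ^ 2))
        (2 * π * (a + t) / (1 + (a + t) ^ 2)) t := by
      intro t _
      have hin : HasDerivAt (fun t : ℝ => 1 + (a + t) ^ 2) (2 * (a + t)) t := by
        simpa using (((hasDerivAt_id t).const_add a).pow 2).const_add (1:ℝ)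
      have hpos : (0:ℝ) < 1 + (a + t) ^ 2 := by positivity
      have := ((Real.hasDerivAt_log hpos.ne').comp t hin).const_mul π
      refine this.congr_deriv ?_
      field_simp
    rw [intervalIntegral.integral_eq_sub_of_hasDerivAt hderiv ?_]
    · norm_num
    · apply ContinuousOn.intervalIntegrable
      apply ContinuousOn.div (by fun_prop) (by fun_prop)
      intro t _; positivity
  -- pointwise FTC in t, for s > 0, s ≠ 1
  have hae1 : ∀ᵐ s : ℝ, s ≠ 1 := by
    refine (ae_iff).mpr ?_
    have h : {s : ℝ | ¬ s ≠ 1} = {1} := by ext x; simp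
    rw [h]; exact Real.volume_singleton
  have hpt : ∀ᵐ s ∂(volume.restrict (Ioi (0:ℝ))),
      (∫ t in Ioc (0:ℝ) b, k t s)
        = a * (Real.log (b ^ 2 + (s - 1) ^ 2) + Real.log (b ^ 2 + (s + 1) ^ 2)) / (a ^ 2 + s ^ 2)
          - a * (Real.log ((s - 1) ^ 2) + Real.log ((s + 1) ^ 2)) / (a ^ 2 + s ^ 2) := by
    rw [ae_restrict_iff' measurableSet_Ioi]
    filter_upwards [hae1] with s hs1 hs
    have hs0 : (0:ℝ) < s := hs
    have hsq : 0 < (s - 1) ^ 2 :=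
      (sq_nonneg _).lt_of_ne (Ne.symm (pow_ne_zero 2 (sub_ne_zero.mpr hs1)))
    have hd1 : ∀ t : ℝ, 0 < t ^ 2 + (s - 1) ^ 2 := fun t => by nlinarith [sq_nonneg t]
    have hd2 : ∀ t : ℝ, 0 < t ^ 2 + (s + 1) ^ 2 := fun t => by positivity
    have hA : ∀ t ∈ uIcc (0:ℝ) b, HasDerivAt
        (fun t : ℝ => a * (Real.log (t ^ 2 + (s - 1) ^ 2) + Real.log (t ^ 2 + (s + 1) ^ 2))
          / (a ^ 2 + s ^ 2)) (k t s) t := by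
      intro t _
      have hin1 : HasDerivAt (fun t : ℝ => t ^ 2 + (s - 1) ^ 2) (2 * t) t := by
        simpa using (hasDerivAt_pow 2 t).add_const ((s - 1) ^ 2)
      have hin2 : HasDerivAt (fun t : ℝ => t ^ 2 + (s + 1) ^ 2) (2 * t) t := by
        simpa using (hasDerivAt_pow 2 t).add_const ((s + 1) ^ 2)
      have hl1 := (Real.hasDerivAt_log (hd1 t).ne').comp t hin1
      have hl2 := (Real.hasDerivAt_log (hd2 t).ne').comp t hin2
      have := ((hl1.add hl2).const_mul a).div_const (a ^ 2 + s ^ 2)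
      refine this.congr_deriv ?_
      rw [hk]
      have h3 : (0:ℝ) < a ^ 2 + s ^ 2 := by positivity
      field_simp
    have hki : IntervalIntegrable (fun t => k t s) volume 0 b := by
      apply ContinuousOn.intervalIntegrable
      rw [hk]
      apply ContinuousOn.div
      · apply ContinuousOn.mul continuousOn_const
        apply ContinuousOn.add
        · exact ContinuousOn.div (by fun_prop) (by fun_prop) (fun t _ => (hd1 t).ne')
        · exact ContinuousOn.div (by fun_prop) (by fun_prop) (fun t _ => (hd2 t).ne')
      · fun_prop
      · intro t _; positivity
    rw [← intervalIntegral.integral_of_le hb.le,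
      intervalIntegral.integral_eq_sub_of_hasDerivAt hA hki]
    norm_num
  have hgb_int : Integrable (fun s => ∫ t in Ioc (0:ℝ) b, k t s) (volume.restrict (Ioi (0:ℝ))) :=
    hprod.integral_prod_right
  have hF0_int := intB ha
  -- integrability of F b
  have hFb_int : IntegrableOn (fun s : ℝ =>
      a * (Real.log (b ^ 2 + (s - 1) ^ 2) + Real.log (b ^ 2 + (s + 1) ^ 2)) / (a ^ 2 + s ^ 2))
      (Ioi (0:ℝ)) := by
    refine (hF0_int.add hgb_int).congr ?_
    filter_upwards [hpt] with s hps
    rw [Pi.add_apply, hps]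
    ring
  refine ⟨hFb_int, ?_⟩
  have hswap' : (∫ s in Ioi (0:ℝ), ∫ t in Ioc (0:ℝ) b, k t s)
      = π * Real.log (1 + (a + b) ^ 2) - π * Real.log (1 + a ^ 2) := by
    rw [← hswap]; exact hleft
  have hsplit : ∫ s in Ioi (0:ℝ), a * (Real.log (b ^ 2 + (s - 1) ^ 2)
        + Real.log (b ^ 2 + (s + 1) ^ 2)) / (a ^ 2 + s ^ 2)
      = ∫ s in Ioi (0:ℝ), (a * (Real.log ((s - 1) ^ 2) + Real.log ((s + 1) ^ 2)) / (a ^ 2 + s ^ 2)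
          + ∫ t in Ioc (0:ℝ) b, k t s) := by
    refine integral_congr_ae ?_
    filter_upwards [hpt] with s hps
    rw [hps]; ring
  rw [hsplit, integral_add hF0_int hgb_int, hswap']

set_option maxHeartbeats 1000000 in
lemma key {a : ℝ} (ha : 0 < a) :
    ∫ s in Ioi (0:ℝ), a * Real.log |1 - s ^ 2| / (a ^ 2 + s ^ 2)
      = π / 2 * Real.log (1 + a ^ 2) := by
  set G := ∫ s in Ioi (0:ℝ), a * Real.log |1 - s ^ 2| / (a ^ 2 + s ^ 2) with hG
  set F0 : ℝ → ℝ := fun s => a * (Real.log ((s - 1) ^ 2) + Real.log ((s + 1) ^ 2)) / (a ^ 2 + s ^ 2)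
    with hF0
  have hae1 : ∀ᵐ s : ℝ, s ≠ 1 := by
    refine (ae_iff).mpr ?_
    have h : {s : ℝ | ¬ s ≠ 1} = {1} := by ext x; simp
    rw [h]; exact Real.volume_singleton
  -- ∫ F0 = 2 G
  have hG2 : ∫ s in Ioi (0:ℝ), F0 s = 2 * G := by
    rw [hG, ← integral_const_mul]
    refine integral_congr_ae ?_
    rw [EventuallyEq, ae_restrict_iff' measurableSet_Ioi]
    filter_upwards [hae1] with s hs1 hs
    have hs0 : (0:ℝ) < s := hs
    have e : Real.log ((s - 1) ^ 2) + Real.log ((s + 1) ^ 2) = 2 * Real.log |1 - s ^ 2| := by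
      have h1 : Real.log ((s - 1) * (s + 1)) = Real.log (s - 1) + Real.log (s + 1) :=
        Real.log_mul (sub_ne_zero.mpr hs1) (by positivity)
      have h2 : (s - 1) * (s + 1) = -(1 - s ^ 2) := by ring
      calc Real.log ((s - 1) ^ 2) + Real.log ((s + 1) ^ 2)
          = 2 * Real.log (s - 1) + 2 * Real.log (s + 1) := by
            rw [Real.log_pow, Real.log_pow]; push_cast; ring
        _ = 2 * Real.log ((s - 1) * (s + 1)) := by rw [h1]; ring
        _ = 2 * Real.log |1 - s ^ 2| := by rw [h2, Real.log_neg_eq_log, Real.log_abs]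
    show a * (Real.log ((s - 1) ^ 2) + Real.log ((s + 1) ^ 2)) / (a ^ 2 + s ^ 2)
        = 2 * (a * Real.log |1 - s ^ 2| / (a ^ 2 + s ^ 2))
    rw [e]; ring
  -- DCT sequence
  set φ : ℕ → ℝ → ℝ := fun n s =>
    a * (Real.log (((n:ℝ) + 1) ^ 2 + (s - 1) ^ 2) + Real.log (((n:ℝ) + 1) ^ 2 + (s + 1) ^ 2))
      / (a ^ 2 + s ^ 2)
    - 2 * Real.log (1 + (a + ((n:ℝ) + 1)) ^ 2) * (a / (a ^ 2 + s ^ 2)) with hφ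
  have hbn : ∀ n : ℕ, (0:ℝ) < (n:ℝ) + 1 := fun n => by positivity
  have hconst : ∀ n : ℕ, ∫ s in Ioi (0:ℝ), φ n s
      = (∫ s in Ioi (0:ℝ), F0 s) - π * Real.log (1 + a ^ 2) := by
    intro n
    have hsf := step_fubini ha (hbn n)
    have hbase := base_lemma ha
    have h1 : ∫ s in Ioi (0:ℝ), φ n s
        = (∫ s in Ioi (0:ℝ), a * (Real.log (((n:ℝ) + 1) ^ 2 + (s - 1) ^ 2)
            + Real.log (((n:ℝ) + 1) ^ 2 + (s + 1) ^ 2)) / (a ^ 2 + s ^ 2))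
          - ∫ s in Ioi (0:ℝ), 2 * Real.log (1 + (a + ((n:ℝ) + 1)) ^ 2) * (a / (a ^ 2 + s ^ 2)) :=
      integral_sub hsf.1 (hbase.1.const_mul _)
    rw [h1, integral_const_mul, hbase.2, hsf.2]
    ring
  -- dominated convergence
  have hDCT : Tendsto (fun n => ∫ s in Ioi (0:ℝ), φ n s) atTop (𝓝 0) := by
    suffices hmain : Tendsto (fun n => ∫ s in Ioi (0:ℝ), φ n s) atTop
        (𝓝 (∫ (_ : ℝ) in Ioi (0:ℝ), (0:ℝ))) by simpa using hmain
    refine tendsto_integral_of_dominated_convergence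
      (fun s => a * (4 * Real.log (1 + s) + 4 * Real.log (2 + a)) / (a ^ 2 + s ^ 2))
      (fun n => ?_) ?_ (fun n => ?_) ?_
    · -- measurability
      apply AEStronglyMeasurable.sub
      · refine (Measurable.aestronglyMeasurable ?_)
        refine Measurable.div ?_ (by fun_prop)
        refine Measurable.const_mul (Measurable.add ?_ ?_) a
        · exact Real.measurable_log.comp (((measurable_id.sub_const 1).pow_const 2).const_add _)
        · exact Real.measurable_log.comp (((measurable_id.add_const 1).pow_const 2).const_add _)
      · exact (((by fun_prop : Measurable (fun s : ℝ => a / (a ^ 2 + s ^ 2))).const_mul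
          _)).aestronglyMeasurable
    · -- bound integrable
      have hsum := ((intA ha).const_mul (4 * a)).add ((base_lemma ha).1.const_mul
        (4 * Real.log (2 + a)))
      refine hsum.congr (Filter.EventuallyEq.of_eq (funext fun s => ?_))
      simp only [Pi.add_apply]
      ring
    · -- bound holds
      rw [ae_restrict_iff' measurableSet_Ioi]
      filter_upwards with s hs
      have hs0 : (0:ℝ) < s := hs
      set b : ℝ := (n:ℝ) + 1 with hb
      have hb1 : (1:ℝ) ≤ b := by simp [hb]
      have hb0 : (0:ℝ) < b := by linarith
      have hA1 : (0:ℝ) < b ^ 2 + (s - 1) ^ 2 := by positivity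
      have hA2 : (0:ℝ) < b ^ 2 + (s + 1) ^ 2 := by positivity
      have hC : (0:ℝ) < 1 + (a + b) ^ 2 := by positivity
      have hlog1p : (0:ℝ) ≤ Real.log (1 + s) := Real.log_nonneg (by linarith)
      have hlog2a : (0:ℝ) ≤ Real.log (2 + a) := Real.log_nonneg (by linarith)
      have hup : ∀ c : ℝ, c ^ 2 ≤ (1 + s) ^ 2 → 0 < b ^ 2 + c ^ 2 →
          Real.log (b ^ 2 + c ^ 2) - Real.log (1 + (a + b) ^ 2) ≤ 2 * Real.log (1 + s) := by
        intro c hc hpos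
        have harg : b ^ 2 + c ^ 2 ≤ (1 + s) ^ 2 * (1 + (a + b) ^ 2) := by
          have h3 : (1:ℝ) ≤ (1 + s) ^ 2 := by nlinarith
          have h2 : b ^ 2 ≤ (a + b) ^ 2 := by nlinarith
          nlinarith [mul_le_mul_of_nonneg_right h3 (sq_nonneg (a + b))]
        have := Real.log_le_log hpos harg
        rw [Real.log_mul (by positivity) (by positivity)] at this
        have hlp : Real.log ((1 + s) ^ 2) = 2 * Real.log (1 + s) := by
          rw [Real.log_pow]; push_cast; ring
        rw [hlp] at this
        linarith
      have hlo : ∀ c : ℝ, 0 < b ^ 2 + c ^ 2 →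
          Real.log (1 + (a + b) ^ 2) - Real.log (b ^ 2 + c ^ 2) ≤ 2 * Real.log (2 + a) := by
        intro c hpos
        have harg : 1 + (a + b) ^ 2 ≤ (2 + a) ^ 2 * (b ^ 2 + c ^ 2) := by
          have h4 : a + b ≤ (a + 1) * b := by nlinarith
          have h5 : (a + b) ^ 2 ≤ (a + 1) ^ 2 * b ^ 2 := by nlinarith
          nlinarith [sq_nonneg c, sq_nonneg (2 + a)]
        have := Real.log_le_log hC harg
        rw [Real.log_mul (by positivity) (by positivity)] at this
        have hlp : Real.log ((2 + a) ^ 2) = 2 * Real.log (2 + a) := by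
          rw [Real.log_pow]; push_cast; ring
        rw [hlp] at this
        linarith
      have hd1 : |Real.log (b ^ 2 + (s - 1) ^ 2) - Real.log (1 + (a + b) ^ 2)|
          ≤ 2 * Real.log (1 + s) + 2 * Real.log (2 + a) := by
        refine abs_le.mpr ⟨?_, ?_⟩
        · have := hlo (s - 1) hA1; linarith
        · have := hup (s - 1) (by nlinarith) hA1; linarith
      have hd2 : |Real.log (b ^ 2 + (s + 1) ^ 2) - Real.log (1 + (a + b) ^ 2)|
          ≤ 2 * Real.log (1 + s) + 2 * Real.log (2 + a) := by
        refine abs_le.mpr ⟨?_, ?_⟩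
        · have := hlo (s + 1) hA2; linarith
        · have := hup (s + 1) (by nlinarith) hA2; linarith
      have hφeq : φ n s = (a / (a ^ 2 + s ^ 2)) *
          ((Real.log (b ^ 2 + (s - 1) ^ 2) - Real.log (1 + (a + b) ^ 2))
            + (Real.log (b ^ 2 + (s + 1) ^ 2) - Real.log (1 + (a + b) ^ 2))) := by
        simp only [hφ, hb]; ring
      rw [Real.norm_eq_abs, hφeq, abs_mul,
        abs_of_nonneg (by positivity : (0:ℝ) ≤ a / (a ^ 2 + s ^ 2))]
      have habs : |(Real.log (b ^ 2 + (s - 1) ^ 2) - Real.log (1 + (a + b) ^ 2))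
            + (Real.log (b ^ 2 + (s + 1) ^ 2) - Real.log (1 + (a + b) ^ 2))|
          ≤ 4 * Real.log (1 + s) + 4 * Real.log (2 + a) :=
        (abs_add_le _ _).trans (by linarith)
      calc a / (a ^ 2 + s ^ 2) * |(Real.log (b ^ 2 + (s - 1) ^ 2) - Real.log (1 + (a + b) ^ 2))
            + (Real.log (b ^ 2 + (s + 1) ^ 2) - Real.log (1 + (a + b) ^ 2))|
            ≤ a / (a ^ 2 + s ^ 2) * (4 * Real.log (1 + s) + 4 * Real.log (2 + a)) :=
          mul_le_mul_of_nonneg_left habs (by positivity)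
        _ = a * (4 * Real.log (1 + s) + 4 * Real.log (2 + a)) / (a ^ 2 + s ^ 2) := by ring
    · -- pointwise limit
      rw [ae_restrict_iff' measurableSet_Ioi]
      filter_upwards with s hs
      have hs0 : (0:ℝ) < s := hs
      have hnat : Tendsto (fun n : ℕ => ((n:ℝ))) atTop atTop := tendsto_natCast_atTop_atTop
      have ht1 : Tendsto (fun n : ℕ => Real.log (((n:ℝ) + 1) ^ 2 + (s - 1) ^ 2)
          - Real.log (1 + (a + ((n:ℝ) + 1)) ^ 2)) atTop (𝓝 0) := by
        refine tendsto_log_sub ?_ ?_ ?_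
        · have h := (tendsto_ratio ((s - 1) ^ 2) 1 1 (a + 1) one_pos.le).comp hnat
          refine h.congr fun n => ?_
          simp only [Function.comp]
          ring_nf
        · filter_upwards with n; positivity
        · filter_upwards with n; positivity
      have ht2 : Tendsto (fun n : ℕ => Real.log (((n:ℝ) + 1) ^ 2 + (s + 1) ^ 2)
          - Real.log (1 + (a + ((n:ℝ) + 1)) ^ 2)) atTop (𝓝 0) := by
        refine tendsto_log_sub ?_ ?_ ?_
        · have h := (tendsto_ratio ((s + 1) ^ 2) 1 1 (a + 1) one_pos.le).comp hnat
          refine h.congr fun n => ?_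
          simp only [Function.comp]
          ring_nf
        · filter_upwards with n; positivity
        · filter_upwards with n; positivity
      have := ((ht1.add ht2).const_mul (a / (a ^ 2 + s ^ 2)))
      simp only [add_zero, mul_zero] at this
      refine this.congr fun n => ?_
      simp only [hφ]
      ring
  have hcv : Tendsto (fun _ : ℕ => (∫ s in Ioi (0:ℝ), F0 s) - π * Real.log (1 + a ^ 2))
      atTop (𝓝 0) := by
    refine hDCT.congr fun n => hconst n
  have hzero : (∫ s in Ioi (0:ℝ), F0 s) - π * Real.log (1 + a ^ 2) = 0 :=
    tendsto_nhds_unique tendsto_const_nhds hcv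
  rw [hG2] at hzero
  linarith

theorem integral_log_abs_one_sub_sq :
    ∀ (lam ξ : ℝ), 0 < lam → 0 < ξ →
      (1 / π) * ∫ ζ in Ioi (0:ℝ), ξ * Real.log |1 - ζ ^ 2 / lam ^ 2| / (ξ ^ 2 + ζ ^ 2)
        = (1 / 2) * Real.log (1 + ξ ^ 2 / lam ^ 2) := by
  intro lam ξ hlam hξ
  have ha : 0 < ξ / lam := div_pos hξ hlam
  have hsub := MeasureTheory.integral_comp_mul_left_Ioi
    (fun ζ => ξ * Real.log |1 - ζ ^ 2 / lam ^ 2| / (ξ ^ 2 + ζ ^ 2)) 0 hlam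
  rw [mul_zero] at hsub
  have h2 : ∫ ζ in Ioi (0:ℝ), ξ * Real.log |1 - ζ ^ 2 / lam ^ 2| / (ξ ^ 2 + ζ ^ 2)
      = lam * ∫ s in Ioi (0:ℝ),
          ξ * Real.log |1 - (lam * s) ^ 2 / lam ^ 2| / (ξ ^ 2 + (lam * s) ^ 2) := by
    rw [hsub, smul_eq_mul, ← mul_assoc, mul_inv_cancel₀ hlam.ne', one_mul]
  have h3 : ∀ s : ℝ, lam * (ξ * Real.log |1 - (lam * s) ^ 2 / lam ^ 2| / (ξ ^ 2 + (lam * s) ^ 2))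
      = (ξ / lam) * Real.log |1 - s ^ 2| / ((ξ / lam) ^ 2 + s ^ 2) := by
    intro s
    have e1 : (lam * s) ^ 2 / lam ^ 2 = s ^ 2 := by
      rw [mul_pow]; field_simp
    rw [e1]
    have hden : ξ ^ 2 + (lam * s) ^ 2 ≠ 0 := by positivity
    have hden2 : (ξ / lam) ^ 2 + s ^ 2 ≠ 0 := by positivity
    field_simp
  have h4 : (∫ s in Ioi (0:ℝ),
        lam * (ξ * Real.log |1 - (lam * s) ^ 2 / lam ^ 2| / (ξ ^ 2 + (lam * s) ^ 2)))
      = ∫ s in Ioi (0:ℝ), (ξ / lam) * Real.log |1 - s ^ 2| / ((ξ / lam) ^ 2 + s ^ 2) :=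
    integral_congr_ae (Filter.Eventually.of_forall fun s => h3 s)
  rw [h2, ← integral_const_mul, h4, key ha]
  rw [div_pow]
  have hπ := Real.pi_ne_zero
  field_simp
end

section
/- Let V : (0,∞) → [0,∞) be nondecreasing and subadditive with V(0)=0, and suppose there is a function ψ > 0 on (0,∞) such that the Laplace transform satisfies e^{-2G/π}/(ξ√ψ(ξ²)) ≤ LV(ξ) ≤ e^{2G/π}/(ξ√ψ(ξ²)) for all ξ > 0, where G is the Catalan constant. Then (1/5)·(1/√ψ(1/x²)) ≤ V(x) ≤ 5·(1/√ψ(1/x²)) for all x > 0. -/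
open MeasureTheory Real Set Filter Topology

lemma base_summable : Summable (fun n : ℕ => (((n:ℝ)+1)^2)⁻¹) := by
  have h : Summable (fun n : ℕ => (((n:ℝ))^2)⁻¹) := Real.summable_nat_pow_inv.mpr one_lt_two
  have := (summable_nat_add_iff 1).mpr h
  simpa using this

lemma aff_summable {a b : ℝ} (ha : 1 ≤ a) (hb : 1 ≤ b) :
    Summable (fun n : ℕ => ((a*n+b)^2)⁻¹) := by
  refine Summable.of_nonneg_of_le (fun n => by positivity) (fun n => ?_) base_summable
  have h1 : (n:ℝ) + 1 ≤ a*n + b := by nlinarith [Nat.cast_nonneg (α := ℝ) n]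
  have h0 : (0:ℝ) < (n:ℝ)+1 := by positivity
  exact inv_anti₀ (by positivity) (by nlinarith)

lemma cat_summable : Summable (fun n : ℕ => (-1:ℝ)^n/(2*n+1)^2) := by
  refine Summable.of_abs ?_
  refine (aff_summable (by norm_num : (1:ℝ) ≤ 2) le_rfl).congr fun n => ?_
  rw [abs_div, abs_pow, abs_neg, abs_one, one_pow, abs_of_nonneg (by positivity : (0:ℝ) ≤ (2*n+1)^2)]
  rw [one_div]

lemma catalan_upper : (∑' n : ℕ, (-1:ℝ)^n/(2*(n:ℝ)+1)^2) ≤ 209/225 := by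
  set f : ℕ → ℝ := fun n => (-1:ℝ)^n/(2*n+1)^2 with hf
  have hsum : Summable f := cat_summable
  have h3 := Summable.sum_add_tsum_nat_add 3 hsum
  have hhead : (∑ i ∈ Finset.range 3, f i) = 209/225 := by
    simp [hf, Finset.sum_range_succ]
    norm_num
  -- tail
  have hE : Summable (fun k : ℕ => f (2*k + 3)) := by
    refine Summable.of_abs ?_
    refine ((aff_summable (by norm_num : (1:ℝ) ≤ 4) (by norm_num : (1:ℝ) ≤ 7))).congr fun n => ?_
    simp only [hf]
    rw [abs_div, abs_pow, abs_neg, abs_one, one_pow, abs_of_nonneg (by positivity : (0:ℝ) ≤ (2*(2*n+3:ℕ)+1)^2)]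
    push_cast; ring_nf
  have hO : Summable (fun k : ℕ => f (2*k + 1 + 3)) := by
    refine Summable.of_abs ?_
    refine ((aff_summable (by norm_num : (1:ℝ) ≤ 4) (by norm_num : (1:ℝ) ≤ 9))).congr fun n => ?_
    simp only [hf]
    rw [abs_div, abs_pow, abs_neg, abs_one, one_pow, abs_of_nonneg (by positivity : (0:ℝ) ≤ (2*(2*n+1+3:ℕ)+1)^2)]
    push_cast; ring_nf
  have htail := tsum_even_add_odd (f := fun n => f (n + 3)) (by simpa using hE) (by simpa using hO)
  have hEval : (∑' k : ℕ, f (2*k + 3)) = - ∑' k : ℕ, ((4*(k:ℝ)+7)^2)⁻¹ := by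
    rw [← tsum_neg]
    refine tsum_congr fun k => ?_
    simp only [hf]
    have : ((-1:ℝ))^(2*k+3) = -1 := Odd.neg_one_pow ⟨k+1, by ring⟩
    push_cast
    rw [this]; ring_nf
  have hOval : (∑' k : ℕ, f (2*k + 1 + 3)) ≤ ∑' k : ℕ, ((4*(k:ℝ)+7)^2)⁻¹ := by
    refine Summable.tsum_le_tsum (fun k => ?_) (by simpa using hO) (aff_summable (by norm_num) (by norm_num))
    simp only [hf]
    have : ((-1:ℝ))^(2*k+1+3) = 1 := by
      rw [show 2*k+1+3 = 2*(k+2) by ring, pow_mul]; simp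
    push_cast
    rw [this]
    rw [one_div]
    apply inv_anti₀ (by positivity)
    nlinarith [Nat.cast_nonneg (α := ℝ) k]
  have htail_le : (∑' n : ℕ, f (n + 3)) ≤ 0 := by
    rw [← htail]
    have : (∑' k : ℕ, f (2*k + 3)) + (∑' k : ℕ, f (2*k+1+3)) ≤ 0 := by
      rw [hEval]; linarith [hOval]
    simpa using this
  calc (∑' n : ℕ, f n) = (∑ i ∈ Finset.range 3, f i) + ∑' n : ℕ, f (n + 3) := h3.symm
    _ ≤ 209/225 + 0 := by rw [hhead]; linarith
    _ = 209/225 := by norm_num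

lemma exp_5914 : Real.exp 0.5914 ≤ 1.807 := by
  have h := Real.exp_bound' (by norm_num : (0:ℝ) ≤ 0.5914) (by norm_num : (0.5914:ℝ) ≤ 1)
    (by norm_num : 0 < 5)
  refine h.trans ?_
  norm_num [Finset.sum_range_succ, Nat.factorial]

lemma integral_exp_mul_Ioi' {b : ℝ} (hb : 0 < b) (a : ℝ) :
    (∫ t in Ioi a, Real.exp (-(b*t))) = Real.exp (-(b*a))/b := by
  have hderiv : ∀ t ∈ Ioi a, HasDerivAt (fun t => -Real.exp (-(b*t))/b) (Real.exp (-(b*t))) t := by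
    intro t _
    have h1 : HasDerivAt (fun t : ℝ => -(b*t)) (-b) t :=
      (((hasDerivAt_id t).const_mul b).neg).congr_deriv (by simp)
    have : HasDerivAt (fun t => -Real.exp (-(b*t))/b) (-(Real.exp (-(b*t)) * -b) / b) t :=
      (h1.exp.neg).div_const b
    convert this using 1
    field_simp
  have hint : IntegrableOn (fun t => Real.exp (-(b*t))) (Ioi a) := by
    simpa [neg_mul] using exp_neg_integrableOn_Ioi a hb
  have htend : Tendsto (fun t => -Real.exp (-(b*t))/b) atTop (𝓝 0) := by
    have h0 : Tendsto (fun t : ℝ => b*t) atTop atTop :=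
      Tendsto.const_mul_atTop hb tendsto_id
    have := (tendsto_exp_neg_atTop_nhds_zero.comp h0).neg.div_const b
    simpa using this
  have := integral_Ioi_of_hasDerivAt_of_tendsto
    ((Continuous.continuousWithinAt (by fun_prop)) : ContinuousWithinAt (fun t => -Real.exp (-(b*t))/b) (Ici a) a)
    hderiv hint htend
  rw [this]; ring

lemma hasDeriv_poly (x : ℝ) (hx : 0 < x) (t : ℝ) :
    HasDerivAt (fun t : ℝ => -((2*x + t) * Real.exp (-(x⁻¹*t))))
      ((1 + t/x) * Real.exp (-(x⁻¹*t))) t := by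
  have h1 : HasDerivAt (fun t : ℝ => -(x⁻¹*t)) (-x⁻¹) t :=
    (((hasDerivAt_id t).const_mul x⁻¹).neg).congr_deriv (by simp)
  have h2 : HasDerivAt (fun t : ℝ => 2*x + t) 1 t := by
    simpa using (hasDerivAt_id t).const_add (2*x)
  have : HasDerivAt (fun t : ℝ => -((2*x + t) * Real.exp (-(x⁻¹*t))))
      (-(1 * rexp (-(x⁻¹ * t)) + (2 * x + t) * (rexp (-(x⁻¹ * t)) * -x⁻¹))) t := (h2.mul h1.exp).neg
  convert this using 1
  field_simp
  ring

lemma poly_tendsto (x : ℝ) (hx : 0 < x) :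
    Tendsto (fun t : ℝ => -((2*x + t) * Real.exp (-(x⁻¹*t)))) atTop (𝓝 0) := by
  have h0 : Tendsto (fun t : ℝ => x⁻¹*t) atTop atTop :=
    Tendsto.const_mul_atTop (inv_pos.mpr hx) tendsto_id
  have h1 : Tendsto (fun s : ℝ => s * Real.exp (-s)) atTop (𝓝 0) := by
    simpa using Real.tendsto_pow_mul_exp_neg_atTop_nhds_zero 1
  have hA : Tendsto (fun t : ℝ => Real.exp (-(x⁻¹*t))) atTop (𝓝 0) :=
    tendsto_exp_neg_atTop_nhds_zero.comp h0
  have hB : Tendsto (fun t : ℝ => (x⁻¹*t) * Real.exp (-(x⁻¹*t))) atTop (𝓝 0) := h1.comp h0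
  have := ((hA.const_mul (2*x)).add (hB.const_mul x)).neg
  rw [show -(2*x*0 + x*0) = (0:ℝ) by ring] at this
  refine this.congr fun t => ?_
  field_simp

lemma poly_integrable (x : ℝ) (hx : 0 < x) :
    IntegrableOn (fun t : ℝ => (1 + t/x) * Real.exp (-(x⁻¹*t))) (Ioi 0) := by
  refine integrableOn_Ioi_deriv_of_nonneg (Continuous.continuousWithinAt (by fun_prop)) (fun t _ => hasDeriv_poly x hx t)
    (fun t ht => ?_) (poly_tendsto x hx)
  have : 0 < t := ht
  positivity

lemma poly_integral (x : ℝ) (hx : 0 < x) :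
    (∫ t in Ioi 0, (1 + t/x) * Real.exp (-(x⁻¹*t))) = 2*x := by
  have := integral_Ioi_of_hasDerivAt_of_tendsto
    (f := fun t : ℝ => -((2*x + t) * Real.exp (-(x⁻¹*t))))
    (Continuous.continuousWithinAt (by fun_prop)) (fun t _ => hasDeriv_poly x hx t) (poly_integrable x hx) (poly_tendsto x hx)
  rw [this]; simp

theorem renewal_function_estimate
    (V ψ : ℝ → ℝ) (G : ℝ)
    (hG : G = ∑' n : ℕ, (-1 : ℝ) ^ n / (2 * n + 1) ^ 2)
    (hV_nonneg : ∀ x, 0 < x → 0 ≤ V x)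
    (hV_mono : MonotoneOn V (Ici 0))
    (hV_subadd : ∀ x y : ℝ, 0 ≤ x → 0 ≤ y → V (x + y) ≤ V x + V y)
    (hV0 : V 0 = 0)
    (hψ_pos : ∀ x, 0 < x → 0 < ψ x)
    (hLV : ∀ ξ : ℝ, 0 < ξ →
      Real.exp (-2 * G / π) / (ξ * Real.sqrt (ψ (ξ ^ 2))) ≤
        (∫ x in Ioi (0:ℝ), Real.exp (-ξ * x) * V x) ∧
      (∫ x in Ioi (0:ℝ), Real.exp (-ξ * x) * V x) ≤
        Real.exp (2 * G / π) / (ξ * Real.sqrt (ψ (ξ ^ 2)))) :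
    ∀ x : ℝ, 0 < x →
      (1 / 5) * (1 / Real.sqrt (ψ (1 / x ^ 2))) ≤ V x ∧
      V x ≤ 5 * (1 / Real.sqrt (ψ (1 / x ^ 2))) := by
  intro x hx
  have hξ : 0 < x⁻¹ := inv_pos.mpr hx
  obtain ⟨hlo, hhi⟩ := hLV x⁻¹ hξ
  have hψx : 0 < ψ (1/x^2) := hψ_pos _ (by positivity)
  set S := Real.sqrt (ψ (1/x^2)) with hSdef
  have hS : 0 < S := Real.sqrt_pos.mpr hψx
  have hξsq : (x⁻¹)^2 = 1/x^2 := by field_simp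
  rw [hξsq] at hlo hhi
  set L := ∫ t in Ioi (0:ℝ), Real.exp (-x⁻¹ * t) * V t with hLdef
  -- numeric bounds
  have hGle : G ≤ 209/225 := by rw [hG]; exact catalan_upper
  have hπ : (3.141592:ℝ) < π := by have := Real.pi_gt_d6; linarith
  have hc : 2*G/π ≤ 0.5914 := by
    rw [div_le_iff₀ Real.pi_pos]
    nlinarith
  have hexpc : Real.exp (2*G/π) ≤ 1.807 := (Real.exp_le_exp.mpr hc).trans exp_5914
  have hexpc' : (1:ℝ)/1.807 ≤ Real.exp (-(2*G/π)) := by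
    rw [Real.exp_neg, one_div]
    exact inv_anti₀ (Real.exp_pos _) hexpc
  -- integrability
  have hlopos : 0 < Real.exp (-2 * G / π) / (x⁻¹ * S) := by positivity
  have hLpos : 0 < L := lt_of_lt_of_le hlopos hlo
  have hint : IntegrableOn (fun t => Real.exp (-x⁻¹ * t) * V t) (Ioi 0) := by
    by_contra h
    have h0 : L = 0 := hLdef.trans (integral_undef h)
    linarith
  have hnn : 0 ≤ᵐ[volume.restrict (Ioi (0:ℝ))] fun t => Real.exp (-x⁻¹*t) * V t :=
    (ae_restrict_iff' measurableSet_Ioi).2 (Filter.Eventually.of_forall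
      fun t ht => mul_nonneg (Real.exp_pos _).le (hV_nonneg t ht))
  -- upper bound
  have hintx : IntegrableOn (fun t => Real.exp (-x⁻¹*t) * V t) (Ioi x) :=
    hint.mono_set (Ioi_subset_Ioi hx.le)
  have hconst_int : IntegrableOn (fun t => Real.exp (-x⁻¹*t) * V x) (Ioi x) :=
    (exp_neg_integrableOn_Ioi x hξ).mul_const (V x)
  have step1 : (∫ t in Ioi x, Real.exp (-x⁻¹*t) * V x) ≤ ∫ t in Ioi x, Real.exp (-x⁻¹*t) * V t :=
    setIntegral_mono_on hconst_int hintx measurableSet_Ioi (fun t ht =>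
      mul_le_mul_of_nonneg_left
        (hV_mono (mem_Ici.mpr hx.le) (mem_Ici.mpr (hx.trans ht).le) (le_of_lt ht))
        (Real.exp_pos _).le)
  have step2 : (∫ t in Ioi x, Real.exp (-x⁻¹*t) * V t) ≤ L :=
    setIntegral_mono_set hint hnn ((Ioi_subset_Ioi hx.le).eventuallyLE)
  have step3 : (∫ t in Ioi x, Real.exp (-x⁻¹*t) * V x) = V x * (Real.exp (-1) * x) := by
    rw [integral_mul_const]
    simp only [neg_mul]
    rw [integral_exp_mul_Ioi' hξ, inv_mul_cancel₀ hx.ne']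
    field_simp
  have hhi2 : Real.exp (2*G/π)/(x⁻¹*S) ≤ 1.807*x/S := by
    have heq : Real.exp (2*G/π)/(x⁻¹*S) = Real.exp (2*G/π)*x/S := by
      field_simp
    rw [heq]
    gcongr
  have hupper : V x * (Real.exp (-1) * x) ≤ 1.807*x/S := by
    rw [← step3]; linarith
  have hE0 : (0:ℝ) < Real.exp 1 := Real.exp_pos 1
  have hE : Real.exp 1 < 2.7182818286 := Real.exp_one_lt_d9
  have hVx_le : V x ≤ 1.807 * Real.exp 1 / S := by
    have h2 : V x * ((Real.exp 1)⁻¹ * x) ≤ 1.807 * x / S := by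
      rw [← Real.exp_neg]; exact hupper
    have h3 := mul_le_mul_of_nonneg_right h2
      (le_of_lt (by positivity : (0:ℝ) < Real.exp 1 / x))
    calc V x = V x * ((Real.exp 1)⁻¹ * x) * (Real.exp 1 / x) := by
          field_simp
      _ ≤ (1.807 * x / S) * (Real.exp 1 / x) := h3
      _ = 1.807 * Real.exp 1 / S := by field_simp
  have hub : V x ≤ 5 * (1/S) := by
    refine hVx_le.trans ?_
    rw [show (5:ℝ)*(1/S) = 5/S by ring]
    gcongr
    nlinarith
  -- lower bound
  have hnat : ∀ n : ℕ, V (n*x) ≤ n * V x := by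
    intro n; induction n with
    | zero => simp [hV0]
    | succ n ih =>
      push_cast
      calc V ((n+1)*x) = V (n*x + x) := by ring_nf
        _ ≤ V (n*x) + V x := hV_subadd _ _ (by positivity) hx.le
        _ ≤ n*V x + V x := by linarith
        _ = ((n:ℝ)+1)*V x := by ring
  have hVle : ∀ t : ℝ, 0 < t → V t ≤ (1 + t/x) * V x := by
    intro t ht
    set n := ⌈t/x⌉₊ with hn
    have h1 : t ≤ n*x := by rw [← div_le_iff₀ hx]; exact Nat.le_ceil _
    have h2 : (n:ℝ) < t/x + 1 := Nat.ceil_lt_add_one (by positivity)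
    calc V t ≤ V (n*x) := hV_mono (mem_Ici.mpr ht.le) (mem_Ici.mpr (ht.le.trans h1)) h1
      _ ≤ n * V x := hnat n
      _ ≤ (t/x + 1) * V x := mul_le_mul_of_nonneg_right h2.le (hV_nonneg x hx)
      _ = (1 + t/x) * V x := by ring
  have hg_int : IntegrableOn (fun t : ℝ => ((1 + t/x) * Real.exp (-(x⁻¹*t))) * V x) (Ioi 0) :=
    (poly_integrable x hx).mul_const _
  have step4 : L ≤ ∫ t in Ioi 0, ((1 + t/x) * Real.exp (-(x⁻¹*t))) * V x := by
    rw [hLdef]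
    refine setIntegral_mono_on hint hg_int measurableSet_Ioi (fun t ht => ?_)
    have h := hVle t ht
    calc Real.exp (-x⁻¹*t) * V t ≤ Real.exp (-x⁻¹*t) * ((1+t/x)*V x) :=
          mul_le_mul_of_nonneg_left h (Real.exp_pos _).le
      _ = ((1+t/x) * Real.exp (-(x⁻¹*t))) * V x := by rw [neg_mul]; ring
  have step5 : (∫ t in Ioi 0, ((1 + t/x) * Real.exp (-(x⁻¹*t))) * V x) = 2*x*V x := by
    rw [integral_mul_const, poly_integral x hx]
  have hlo2 : (1/1.807)*x/S ≤ Real.exp (-2*G/π)/(x⁻¹*S) := by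
    have heq : Real.exp (-2*G/π)/(x⁻¹*S) = Real.exp (-(2*G/π))*x/S := by
      rw [show (-2*G/π : ℝ) = -(2*G/π) by ring]
      field_simp
    rw [heq]
    gcongr
  have hlower : (1/1.807)*x ≤ 2*x*V x*S := by
    have h6 : (1/1.807)*x/S ≤ 2*x*V x := by
      calc (1/1.807)*x/S ≤ Real.exp (-2*G/π)/(x⁻¹*S) := hlo2
        _ ≤ L := hlo
        _ ≤ 2*x*V x := by rw [← step5]; exact step4
    calc (1/1.807)*x = ((1/1.807)*x/S)*S := (div_mul_cancel₀ _ hS.ne').symm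
      _ ≤ (2*x*V x)*S := mul_le_mul_of_nonneg_right h6 hS.le
  have hlb : (1/5) * (1/S) ≤ V x := by
    rw [show (1:ℝ)/5 * (1/S) = (1/5)/S by ring, div_le_iff₀ hS]
    nlinarith
  exact ⟨hlb, hub⟩
end

section
/- Let κ : (0,∞) → (0,∞) be nondecreasing and suppose there are c > 0 and ϱ ∈ (0,1) with κ(λz) ≤ c·λ^ϱ·κ(z) for all λ ≥ 1 and z > 0. Let V : (0,∞) → [0,∞). Suppose P : (0,∞)×(0,∞) → [0,1] satisfies the two-sided bound of Theorem 3.1: P(t,x) ≤ min(1, (e/(e−1))·κ(1/t)·V(x)) and P(t,x) ≥ min(C₁, C₂(t)·κ(1/t)·V(x)) with C₂(t) = z(t)·t/(2e) where κ(z(t))/z(t) = (4e²/(e−1))·K(1/t), K(s) = ∫ₛ^∞ κ(z)/z² dz. Then z(t)·t ≥ c₄ > 0 for a constant c₄ depending only on c and ϱ, and consequently C(κ)·min(1, κ(1/t)V(x)) ≤ P(t,x) ≤ min(1, 2κ(1/t)V(x)) for all t, x > 0. -/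
open MeasureTheory Real Set

theorem global_scaling_supremum_estimate
    (κ V : ℝ → ℝ) (P : ℝ → ℝ → ℝ) (z : ℝ → ℝ) (c ϱ : ℝ)
    (hc : 0 < c) (hϱ : ϱ ∈ Ioo (0:ℝ) 1)
    (hκ_pos : ∀ s, 0 < s → 0 < κ s)
    (hκ_mono : MonotoneOn κ (Ioi 0))
    (hscal : ∀ lam s : ℝ, 1 ≤ lam → 0 < s → κ (lam * s) ≤ c * lam ^ ϱ * κ s)
    (hKfin : ∀ s : ℝ, 0 < s → IntegrableOn (fun w => κ w / w ^ 2) (Ioi s))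
    (hV_nonneg : ∀ x, 0 < x → 0 ≤ V x)
    (hz : ∀ t : ℝ, 0 < t → z t ∈ Ioo 0 (1 / t) ∧
      κ (z t) / z t =
        (4 * Real.exp 1 ^ 2 / (Real.exp 1 - 1)) * ∫ w in Ioi (1 / t), κ w / w ^ 2)
    (hP_range : ∀ t x : ℝ, 0 < t → 0 < x → P t x ∈ Icc (0:ℝ) 1)
    (hP_upper : ∀ t x : ℝ, 0 < t → 0 < x →
      P t x ≤ min 1 ((Real.exp 1 / (Real.exp 1 - 1)) * κ (1 / t) * V x))
    (hP_lower : ∀ t x : ℝ, 0 < t → 0 < x →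
      min ((Real.exp 1 - 1) / (8 * Real.exp 1 ^ 2))
        ((z t * t / (2 * Real.exp 1)) * κ (1 / t) * V x) ≤ P t x) :
    (∃ c₄ : ℝ, 0 < c₄ ∧ ∀ t : ℝ, 0 < t → c₄ ≤ z t * t) ∧
    (∃ C : ℝ, 0 < C ∧ ∀ t x : ℝ, 0 < t → 0 < x →
      C * min 1 (κ (1 / t) * V x) ≤ P t x ∧
      P t x ≤ min 1 (2 * κ (1 / t) * V x)) := by
  obtain ⟨hϱ0, hϱ1⟩ := hϱ
  have hϱ1' : (0:ℝ) < 1 - ϱ := by linarith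
  have he : (2.7182818283 : ℝ) < Real.exp 1 := Real.exp_one_gt_d9
  have he1 : (1:ℝ) < Real.exp 1 := by linarith
  set A : ℝ := 4 * Real.exp 1 ^ 2 / (Real.exp 1 - 1) with hA
  have hApos : 0 < A := by
    apply div_pos (by positivity) (by linarith)
  -- upper bound for K(s)
  have hK : ∀ s : ℝ, 0 < s → (∫ w in Ioi s, κ w / w ^ 2) ≤ c / (1 - ϱ) * (κ s / s) := by
    intro s hs
    have hκs := hκ_pos s hs
    have hint2 : IntegrableOn (fun w : ℝ => c * κ s * s ^ (-ϱ) * w ^ (ϱ - 2)) (Ioi s) := by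
      exact (integrableOn_Ioi_rpow_of_lt (by linarith) hs).const_mul _
    have hle : ∀ w ∈ Ioi s, κ w / w ^ 2 ≤ c * κ s * s ^ (-ϱ) * w ^ (ϱ - 2) := by
      intro w hw
      have hws : s < w := hw
      have hw0 : 0 < w := hs.trans hws
      have h1 : κ w ≤ c * (w / s) ^ ϱ * κ s := by
        have h := hscal (w / s) s (by rw [le_div_iff₀ hs]; linarith) hs
        rwa [div_mul_cancel₀ _ hs.ne'] at h
      have h2 : κ w / w ^ 2 ≤ (c * (w / s) ^ ϱ * κ s) / w ^ 2 :=
        div_le_div_of_nonneg_right h1 (by positivity)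
      refine h2.trans_eq ?_
      have hwe : w ^ (ϱ - 2) = w ^ ϱ / w ^ (2:ℕ) := by
        rw [Real.rpow_sub hw0, show (2:ℝ) = ((2:ℕ):ℝ) by norm_num, Real.rpow_natCast]
      have hse : s ^ (-ϱ) = (s ^ ϱ)⁻¹ := Real.rpow_neg hs.le ϱ
      rw [hwe, hse, div_rpow hw0.le hs.le]
      have hsϱ : (0:ℝ) < s ^ ϱ := Real.rpow_pos_of_pos hs ϱ
      field_simp
    calc (∫ w in Ioi s, κ w / w ^ 2)
        ≤ ∫ w in Ioi s, c * κ s * s ^ (-ϱ) * w ^ (ϱ - 2) :=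
          setIntegral_mono_on (hKfin s hs) hint2 measurableSet_Ioi hle
      _ = c * κ s * s ^ (-ϱ) * ∫ w in Ioi s, w ^ (ϱ - 2) :=
          MeasureTheory.integral_const_mul _ _
      _ = c * κ s * s ^ (-ϱ) * (-s ^ (ϱ - 2 + 1) / (ϱ - 2 + 1)) := by
          rw [integral_Ioi_rpow_of_lt (by linarith) hs]
      _ = c * κ s * (s ^ (-ϱ) * s ^ (ϱ - 1)) * (-1 / (ϱ - 1)) := by
          rw [show ϱ - 2 + 1 = ϱ - 1 by ring]; ring
      _ = c / (1 - ϱ) * (κ s / s) := by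
          rw [← Real.rpow_add hs, show -ϱ + (ϱ - 1) = -1 by ring, Real.rpow_neg_one,
            show (-1:ℝ) / (ϱ - 1) = 1 / (1 - ϱ) by
              rw [div_eq_div_iff (by linarith) (by linarith)]; ring]
          ring
  -- the constant c₄
  set B : ℝ := A * c ^ 2 / (1 - ϱ) with hB
  have hBpos : 0 < B := by positivity
  set c₄ : ℝ := B⁻¹ ^ (1 / (1 - ϱ)) with hc₄
  have hc₄pos : 0 < c₄ := Real.rpow_pos_of_pos (by positivity) _
  have hzt : ∀ t : ℝ, 0 < t → c₄ ≤ z t * t := by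
    intro t ht
    obtain ⟨⟨hz0, hz1⟩, heq⟩ := hz t ht
    have hst : 0 < 1 / t := by positivity
    have hκt := hκ_pos (1 / t) hst
    set u : ℝ := z t * t with hu
    have hu0 : 0 < u := mul_pos hz0 ht
    -- lower bound on κ (z t)
    have hlam : 1 ≤ 1 / (t * z t) := by
      rw [le_div_iff₀ (by positivity)]
      rw [lt_div_iff₀ ht] at hz1
      nlinarith
    have h2 : κ (1 / t) ≤ c * (1 / (t * z t)) ^ ϱ * κ (z t) := by
      have h := hscal (1 / (t * z t)) (z t) hlam hz0
      rw [show 1 / (t * z t) * z t = 1 / t by field_simp] at h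
      exact h
    -- upper bound on κ (z t) / z t
    have h3 : κ (z t) / z t ≤ A * (c / (1 - ϱ) * (κ (1 / t) * t)) := by
      have h := (hz t ht).2
      rw [h]
      refine le_trans (mul_le_mul_of_nonneg_left (hK (1 / t) hst) hApos.le) ?_
      rw [show κ (1 / t) / (1 / t) = κ (1 / t) * t by field_simp]
    have hup : (1 / (t * z t)) ^ ϱ = (u ^ ϱ)⁻¹ := by
      rw [one_div, show t * z t = u by rw [hu]; ring]
      exact Real.inv_rpow hu0.le ϱ
    have huϱ : 0 < u ^ ϱ := Real.rpow_pos_of_pos hu0 _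
    have h2' : κ (1 / t) * u ^ ϱ ≤ c * κ (z t) := by
      rw [hup] at h2
      have h := mul_le_mul_of_nonneg_right h2 huϱ.le
      calc κ (1 / t) * u ^ ϱ ≤ c * (u ^ ϱ)⁻¹ * κ (z t) * u ^ ϱ := h
        _ = c * κ (z t) * ((u ^ ϱ)⁻¹ * u ^ ϱ) := by ring
        _ = c * κ (z t) := by rw [inv_mul_cancel₀ huϱ.ne', mul_one]
    have hκz := hκ_pos (z t) hz0
    -- κ (z t) ≤ A * c / (1 - ϱ) * κ (1/t) * u
    have h3' : κ (z t) ≤ A * c / (1 - ϱ) * κ (1 / t) * u := by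
      have h4 := mul_le_mul_of_nonneg_right h3 hz0.le
      rw [div_mul_cancel₀ _ hz0.ne'] at h4
      calc κ (z t) ≤ A * (c / (1 - ϱ) * (κ (1 / t) * t)) * z t := h4
        _ = A * c / (1 - ϱ) * κ (1 / t) * u := by rw [hu]; ring
    have h5 : κ (1 / t) * u ^ ϱ ≤ κ (1 / t) * (B * u) := by
      calc κ (1 / t) * u ^ ϱ ≤ c * κ (z t) := h2'
        _ ≤ c * (A * c / (1 - ϱ) * κ (1 / t) * u) :=
            mul_le_mul_of_nonneg_left h3' hc.le
        _ = κ (1 / t) * (B * u) := by rw [hB]; ring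
    have h6 : u ^ ϱ ≤ B * u := (mul_le_mul_iff_right₀ hκt).mp h5
    have hkey : u ^ (ϱ - 1) ≤ B := by
      rw [Real.rpow_sub hu0, Real.rpow_one, div_le_iff₀ hu0]
      exact h6
    have hinv : B⁻¹ ≤ u ^ (1 - ϱ) := by
      have h0 : 0 < u ^ (1 - ϱ) := Real.rpow_pos_of_pos hu0 _
      have h7 : (u ^ (1 - ϱ))⁻¹ ≤ B := by
        rw [← Real.rpow_neg hu0.le, show -(1 - ϱ) = ϱ - 1 by ring]
        exact hkey
      calc B⁻¹ ≤ ((u ^ (1 - ϱ))⁻¹)⁻¹ := inv_anti₀ (by positivity) h7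
        _ = u ^ (1 - ϱ) := inv_inv _
    calc c₄ = B⁻¹ ^ (1 / (1 - ϱ)) := hc₄
      _ ≤ (u ^ (1 - ϱ)) ^ (1 / (1 - ϱ)) :=
          Real.rpow_le_rpow (by positivity) hinv (by positivity)
      _ = u := by
          rw [← Real.rpow_mul hu0.le, mul_one_div, div_self hϱ1'.ne', Real.rpow_one]
  refine ⟨⟨c₄, hc₄pos, hzt⟩, ?_⟩
  set D : ℝ := (Real.exp 1 - 1) / (8 * Real.exp 1 ^ 2) with hD
  have hDpos : 0 < D := by apply div_pos (by linarith) (by positivity)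
  refine ⟨min D (c₄ / (2 * Real.exp 1)), lt_min hDpos (by positivity), ?_⟩
  intro t x ht hx
  have hκt := hκ_pos (1 / t) (by positivity)
  have hV := hV_nonneg x hx
  have hm : 0 ≤ κ (1 / t) * V x := by positivity
  set m : ℝ := κ (1 / t) * V x with hmm
  set C := min D (c₄ / (2 * Real.exp 1)) with hC
  have hC0 : 0 ≤ C := le_min hDpos.le (by positivity)
  have hCD : C ≤ D := min_le_left _ _
  have hC2 : C ≤ z t * t / (2 * Real.exp 1) := by
    refine (min_le_right _ _).trans ?_
    apply div_le_div_of_nonneg_right (hzt t ht) (by positivity)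
  constructor
  · refine le_trans ?_ (hP_lower t x ht hx)
    rw [show (z t * t / (2 * Real.exp 1)) * κ (1 / t) * V x
      = (z t * t / (2 * Real.exp 1)) * m by rw [hmm]; ring]
    refine le_min ?_ ?_
    · calc C * min 1 m ≤ C * 1 := by
            apply mul_le_mul_of_nonneg_left (min_le_left _ _) hC0
        _ = C := mul_one C
        _ ≤ D := hCD
    · rcases le_total m 1 with h | h
      · rw [min_eq_right h]
        exact mul_le_mul hC2 le_rfl hm (div_nonneg (by nlinarith [hzt t ht, hc₄pos]) (by positivity))
      · rw [min_eq_left h]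
        calc C * 1 = C := mul_one C
          _ ≤ z t * t / (2 * Real.exp 1) := hC2
          _ = z t * t / (2 * Real.exp 1) * 1 := (mul_one _).symm
          _ ≤ z t * t / (2 * Real.exp 1) * m :=
              mul_le_mul_of_nonneg_left h
                (div_nonneg (by nlinarith [hzt t ht, hc₄pos]) (by positivity))
  · refine (hP_upper t x ht hx).trans ?_
    apply min_le_min le_rfl
    rw [mul_assoc, mul_assoc]
    apply mul_le_mul_of_nonneg_right ?_ hm
    rw [div_le_iff₀ (by linarith)]
    linarith
end
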